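/- arXiv:2310.14160 — 10 statements merged into one kernel-verified Lean document; each statement's English description precedes it below -/
import Mathlib

section
/- For every real θ > 0 and all reals p, q ≥ 0, max{ θ(θ − 2p), θ(θ − 2q), p·q } ≥ θ² (√2 − 1)². -/
/-- for every `θ > 0` and `p, q ≥ 0`,
`max {θ(θ − 2p), θ(θ − 2q), pq} ≥ θ²(√2 − 1)²`. -/
theorem max_three_ge (θ p q : ℝ) (hθ : 0 < θ) (hp : 0 ≤ p) (hq : 0 ≤ q) :
    θ ^ 2 * (Real.sqrt 2 - 1) ^ 2 ≤ max (max (θ * (θ - 2 * p)) (θ * (θ - 2 * q))) (p * q) := by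
  set s := Real.sqrt 2 with hs
  have h2 : s ^ 2 = 2 := Real.sq_sqrt (by norm_num)
  have h1 : 1 ≤ s := by nlinarith [Real.sqrt_nonneg 2]
  rcases le_or_gt (θ * (s - 1)) p with hp1 | hp1
  · rcases le_or_gt (θ * (s - 1)) q with hq1 | hq1
    · apply le_max_of_le_right
      nlinarith [mul_le_mul hp1 hq1 (by nlinarith) hp]
    · apply le_max_of_le_left; apply le_max_of_le_right; nlinarith
  · apply le_max_of_le_left; apply le_max_of_le_left; nlinarith
end

section
/- Let Σ be a finite nonempty alphabet and Σ' its squared alphabet. Let ν, μ : Σ' → [0,1] be probability distributions (Σ_{A ∈ Σ'} ν(A) = Σ_{A ∈ Σ'} μ(A) = 1), and let p = max_{α ∈ Σ} Σ_{A ∈ Σ' : α ∈ A} ν(A). Then Σ_{(A,B) ∈ Σ' × Σ' : A and B are consistent} ν(A)·μ(B) ≤ 2p. -/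
/-- The squared alphabet of `A`: subsets of `A` of size one or two. -/
abbrev Sq (A : Type*) := {s : Finset A // 1 ≤ s.card ∧ s.card ≤ 2}

lemma subset_pair_of_card_le_two {S : Type*} [DecidableEq S] {s : Finset S}
    (h1 : 1 ≤ s.card) (h2 : s.card ≤ 2) : ∃ α β, s ⊆ {α, β} := by
  obtain ⟨α, hα⟩ := Finset.card_pos.mp h1
  rcases Finset.eq_empty_or_nonempty (s.erase α) with he | ⟨β, hβ⟩
  · refine ⟨α, α, fun x hx => ?_⟩
    rcases eq_or_ne x α with rfl | hne
    · simp
    · exact absurd (Finset.mem_erase.mpr ⟨hne, hx⟩) (by simp [he])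
  · refine ⟨α, β, fun x hx => ?_⟩
    rcases eq_or_ne x α with rfl | hne
    · simp
    · have hx' : x ∈ s.erase α := Finset.mem_erase.mpr ⟨hne, hx⟩
      have hcard : (s.erase α).card ≤ 1 := by
        have := Finset.card_erase_of_mem hα
        omega
      have : x = β := by
        have := Finset.card_le_one.mp hcard x hx' β hβ
        exact this
      simp [this]

/-- if `ν, μ` are probability distributions over the squared alphabet of `S`
and `p` is the maximum over `α ∈ S` of the `ν`-probability that `α` belongs to the sampled
element, then the probability (under `ν × μ`) of sampling a consistent pair is at most `2p`.
Here `a` and `b` are consistent if `a ⊆ b` or `b ⊆ a`. -/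
theorem consistency_probability_bound {S : Type*} [Fintype S] [DecidableEq S] [Nonempty S]
    (ν μ : Sq S → ℝ)
    (hν0 : ∀ a, 0 ≤ ν a) (hν1 : ∀ a, ν a ≤ 1)
    (hμ0 : ∀ a, 0 ≤ μ a) (hμ1 : ∀ a, μ a ≤ 1)
    (hνs : ∑ a, ν a = 1) (hμs : ∑ a, μ a = 1)
    (p : ℝ)
    (hp : IsGreatest {x : ℝ | ∃ α : S, x = ∑ a : Sq S, if α ∈ a.1 then ν a else 0} p) :
    (∑ a : Sq S, ∑ b : Sq S, if a.1 ⊆ b.1 ∨ b.1 ⊆ a.1 then ν a * μ b else 0) ≤ 2 * p := by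
  have key : ∀ b : Sq S,
      (∑ a : Sq S, if a.1 ⊆ b.1 ∨ b.1 ⊆ a.1 then ν a else 0) ≤ 2 * p := by
    intro b
    obtain ⟨α, β, hb⟩ := subset_pair_of_card_le_two b.2.1 b.2.2
    have step : ∀ a : Sq S,
        (if a.1 ⊆ b.1 ∨ b.1 ⊆ a.1 then ν a else 0) ≤
          (if α ∈ a.1 then ν a else 0) + (if β ∈ a.1 then ν a else 0) := by
      intro a
      split_ifs with h h1 h2 h2 h1 h2 h2
      all_goals try linarith [hν0 a]
      -- remaining case: consistent but α ∉ a.1 and β ∉ a.1 : contradiction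
      all_goals {
        exfalso
        rcases h with hab | hba
        · obtain ⟨γ, hγ⟩ := Finset.card_pos.mp a.2.1
          have : γ ∈ ({α, β} : Finset S) := hb (hab hγ)
          simp only [Finset.mem_insert, Finset.mem_singleton] at this
          rcases this with rfl | rfl <;> [exact h1 hγ; exact h2 hγ]
        · obtain ⟨γ, hγ⟩ := Finset.card_pos.mp b.2.1
          have hm : γ ∈ ({α, β} : Finset S) := hb hγ
          simp only [Finset.mem_insert, Finset.mem_singleton] at hm
          rcases hm with rfl | rfl <;> [exact h1 (hba hγ); exact h2 (hba hγ)]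
      }
    calc (∑ a : Sq S, if a.1 ⊆ b.1 ∨ b.1 ⊆ a.1 then ν a else 0)
        ≤ ∑ a : Sq S, ((if α ∈ a.1 then ν a else 0) + (if β ∈ a.1 then ν a else 0)) :=
          Finset.sum_le_sum fun a _ => step a
      _ = (∑ a : Sq S, if α ∈ a.1 then ν a else 0) +
            (∑ a : Sq S, if β ∈ a.1 then ν a else 0) := Finset.sum_add_distrib
      _ ≤ p + p := add_le_add (hp.2 ⟨α, rfl⟩) (hp.2 ⟨β, rfl⟩)
      _ = 2 * p := by ring
  rw [Finset.sum_comm]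
  calc (∑ b : Sq S, ∑ a : Sq S, if a.1 ⊆ b.1 ∨ b.1 ⊆ a.1 then ν a * μ b else 0)
      = ∑ b : Sq S, (∑ a : Sq S, if a.1 ⊆ b.1 ∨ b.1 ⊆ a.1 then ν a else 0) * μ b := by
        refine Finset.sum_congr rfl fun b _ => ?_
        rw [Finset.sum_mul]
        exact Finset.sum_congr rfl fun a _ => by split_ifs <;> simp
    _ ≤ ∑ b : Sq S, (2 * p) * μ b :=
        Finset.sum_le_sum fun b _ => mul_le_mul_of_nonneg_right (key b) (hμ0 b)
    _ = 2 * p := by rw [← Finset.mul_sum, hμs, mul_one]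
end

section
/- Let G = (V, E, Σ, Π) be a constraint graph with E nonempty in which every vertex lies on at most d edges (counted with multiplicity), let ε ∈ (0,1), let k ≥ 1 be an integer, and let (ψ^(1), …, ψ^(T)) be a finite sequence of assignments with ψ^(1) = ψ^ini and ψ^(T) = ψ^tar such that consecutive assignments differ on at most k vertices. If val_G(ψ^ini ↭ ψ^tar) < 1 − ε, then there exists t ∈ [T] with val_G(ψ^(t)) < 1 − ε + dk/|E|. -/
/-- Two assignments differ on at most one vertex. -/
def adjOne {V A : Type*} (ψ φ : V → A) : Prop := ∃ v0, ∀ v, v ≠ v0 → ψ v = φ v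

/-- Value of an assignment: the fraction of constraints (indexed by `ι`, with multiplicity)
that it satisfies. -/
noncomputable def valC {V A ι : Type*} [Fintype ι] (sat : ι → (V → A) → Prop)
    (ψ : V → A) : ℝ :=
  (Nat.card {i : ι // sat i ψ} : ℝ) / (Fintype.card ι : ℝ)

/-- The minimum value along a sequence of assignments. -/
noncomputable def valSeqC {V A ι : Type*} [Fintype ι] (sat : ι → (V → A) → Prop)
    (l : List (V → A)) : ℝ :=
  (l.map (valC sat)).foldr min 1

/-- `maxValC sat ψi ψt` is the maximum, over all reconfiguration sequences from `ψi` to `ψt`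
(finite sequences of assignments starting at `ψi`, ending at `ψt`, consecutive assignments
differing on at most one vertex), of the minimum value along the sequence. -/
noncomputable def maxValC {V A ι : Type*} [Fintype ι] (sat : ι → (V → A) → Prop)
    (ψi ψt : V → A) : ℝ :=
  sSup {r : ℝ | ∃ l : List (V → A), l ≠ [] ∧ l.head? = some ψi ∧ l.getLast? = some ψt ∧
    l.Chain' adjOne ∧ r = valSeqC sat l}

/-- Two assignments differ on at most `k` vertices. -/
def diffLe {V A : Type*} (k : ℕ) (ψ φ : V → A) : Prop :=
  ∃ s : Finset V, s.card ≤ k ∧ ∀ v ∉ s, ψ v = φ v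



lemma foldr_min_le_one (xs : List ℝ) : xs.foldr min 1 ≤ 1 := by
  induction xs with
  | nil => simp
  | cons a t ih => exact le_trans (min_le_right _ _) ih

lemma le_foldr_min (xs : List ℝ) (c : ℝ) (hc : c ≤ 1) (h : ∀ x ∈ xs, c ≤ x) :
    c ≤ xs.foldr min 1 := by
  induction xs with
  | nil => simpa
  | cons a t ih =>
    exact le_min (h a (by simp)) (ih fun x hx => h x (by simp [hx]))

open Classical in
lemma valC_eq_filter {V A ι : Type*} [Fintype ι] (sat : ι → (V → A) → Prop) (ψ : V → A) :
    valC sat ψ = ((Finset.univ.filter (fun i => sat i ψ)).card : ℝ) / (Fintype.card ι : ℝ) := by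
  unfold valC
  congr 2
  rw [Nat.card_eq_fintype_card, Fintype.card_subtype]

lemma valC_lip {V A ι : Type*} [Fintype ι] [Nonempty ι] (he : ι → V × V) (hc : ι → Set (A × A))
    (d k : ℕ) (hdeg : ∀ v : V, Nat.card {i : ι // (he i).1 = v ∨ (he i).2 = v} ≤ d)
    (ψ φ : V → A) (h : diffLe k ψ φ) :
    valC (fun i χ => (χ (he i).1, χ (he i).2) ∈ hc i) φ ≤
      valC (fun i χ => (χ (he i).1, χ (he i).2) ∈ hc i) ψ
        + ((d : ℝ) * (k : ℝ)) / (Fintype.card ι : ℝ) := by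
  classical
  obtain ⟨s, hs, hag⟩ := h
  rw [valC_eq_filter, valC_eq_filter]
  have hN : (0 : ℝ) < (Fintype.card ι : ℝ) := by
    exact_mod_cast Fintype.card_pos
  rw [← add_div, div_le_div_iff_of_pos_right hN]
  -- key cardinality bound
  have hsub : (Finset.univ.filter (fun i => (φ (he i).1, φ (he i).2) ∈ hc i)) ⊆
      (Finset.univ.filter (fun i => (ψ (he i).1, ψ (he i).2) ∈ hc i)) ∪
      (s.biUnion (fun v => Finset.univ.filter (fun i => (he i).1 = v ∨ (he i).2 = v))) := by
    intro i hi
    simp only [Finset.mem_filter, Finset.mem_univ, true_and] at hi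
    by_cases h1 : (he i).1 ∈ s
    · exact Finset.mem_union_right _ (Finset.mem_biUnion.mpr ⟨_, h1, by simp⟩)
    by_cases h2 : (he i).2 ∈ s
    · exact Finset.mem_union_right _ (Finset.mem_biUnion.mpr ⟨_, h2, by simp⟩)
    · refine Finset.mem_union_left _ ?_
      simp only [Finset.mem_filter, Finset.mem_univ, true_and]
      rwa [hag _ h1, hag _ h2]
  have hb : (s.biUnion (fun v => Finset.univ.filter (fun i => (he i).1 = v ∨ (he i).2 = v))).card
      ≤ k * d := by
    calc _ ≤ ∑ v ∈ s, (Finset.univ.filter (fun i => (he i).1 = v ∨ (he i).2 = v)).card :=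
          Finset.card_biUnion_le
      _ ≤ ∑ _v ∈ s, d := by
          refine Finset.sum_le_sum fun v _ => ?_
          have := hdeg v
          rwa [Nat.card_eq_fintype_card, Fintype.card_subtype] at this
      _ = s.card * d := by rw [Finset.sum_const, smul_eq_mul]
      _ ≤ k * d := Nat.mul_le_mul_right d hs
  have hcard : (Finset.univ.filter (fun i => (φ (he i).1, φ (he i).2) ∈ hc i)).card ≤
      (Finset.univ.filter (fun i => (ψ (he i).1, ψ (he i).2) ∈ hc i)).card + k * d :=
    le_trans (Finset.card_le_card hsub)
      (le_trans (Finset.card_union_le _ _) (by omega))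
  have := (Nat.cast_le (α := ℝ)).mpr hcard
  push_cast at this ⊢
  linarith

lemma path_exists {V A : Type*} [DecidableEq V] (φ : V → A) (s : Finset V) :
    ∀ ψ : V → A, (∀ v ∉ s, ψ v = φ v) →
    ∃ m : List (V → A), m ≠ [] ∧ m.head? = some ψ ∧ m.getLast? = some φ ∧
      m.Chain' adjOne ∧ ∀ χ ∈ m, ∀ v ∉ s, χ v = φ v := by
  induction s using Finset.induction_on with
  | empty =>
    intro ψ h
    have hψ : ψ = φ := funext fun v => h v (by simp)
    exact ⟨[φ], by simp, by simp [hψ], by simp, List.isChain_singleton _, by simp⟩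
  | insert a s ha ih =>
    intro ψ h
    set ψ' := Function.update ψ a (φ a) with hψ'def
    have hψ' : ∀ v ∉ s, ψ' v = φ v := by
      intro v hv
      by_cases hva : v = a
      · subst hva; simp [hψ'def]
      · rw [hψ'def, Function.update_of_ne hva]
        exact h v (by simp [hva, hv])
    obtain ⟨m, hmne, hmh, hml, hmc, hmmem⟩ := ih ψ' hψ'
    refine ⟨ψ :: m, by simp, by simp, ?_, ?_, ?_⟩
    · cases m with
      | nil => exact absurd rfl hmne
      | cons b t => rw [List.getLast?_cons_cons]; exact hml
    · refine List.isChain_cons.mpr ⟨?_, hmc⟩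
      intro y hy
      rw [hmh] at hy
      obtain rfl : ψ' = y := by injection hy
      exact ⟨a, fun v hv => (Function.update_of_ne hv _ _).symm⟩
    · intro χ hχ v hv
      rcases List.mem_cons.mp hχ with rfl | hχ
      · exact h v hv
      · exact hmmem χ hχ v (fun hvs => hv (Finset.mem_insert_of_mem hvs))

lemma refine_list {V A : Type*} [DecidableEq V] (k : ℕ) :
    ∀ l : List (V → A), l ≠ [] → l.Chain' (diffLe k) →
    ∃ L : List (V → A), L ≠ [] ∧ L.head? = l.head? ∧ L.getLast? = l.getLast? ∧
      L.Chain' adjOne ∧ ∀ χ ∈ L, ∃ φ ∈ l, diffLe k χ φ := by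
  intro l
  induction l with
  | nil => intro h; exact absurd rfl h
  | cons ψ rest ih =>
    intro _ hchain
    cases rest with
    | nil =>
      exact ⟨[ψ], by simp, rfl, rfl, List.isChain_singleton _, fun χ hχ => by
        simp only [List.mem_singleton] at hχ
        exact ⟨ψ, by simp, by subst hχ; exact ⟨∅, by simp, fun v _ => rfl⟩⟩⟩
    | cons φ t =>
      obtain ⟨hd, hchain'⟩ := List.isChain_cons_cons.mp hchain
      obtain ⟨L', hL'ne, hL'h, hL'l, hL'c, hL'mem⟩ := ih (by simp) hchain'
      obtain ⟨s, hs, hag⟩ := hd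
      obtain ⟨m, hmne, hmh, hml, hmc, hmmem⟩ := path_exists φ s ψ hag
      -- L' starts with φ
      obtain ⟨t', rfl⟩ : ∃ t', L' = φ :: t' := by
        cases L' with
        | nil => exact absurd rfl hL'ne
        | cons b t'' =>
          simp only [List.head?_cons, List.head?] at hL'h
          obtain rfl : b = φ := by injection hL'h
          exact ⟨t'', rfl⟩
      refine ⟨m ++ t', ?_, ?_, ?_, ?_, ?_⟩
      · simp [hmne]
      · cases m with
        | nil => exact absurd rfl hmne
        | cons b mt =>
          simp only [List.head?_cons] at hmh ⊢
          exact hmh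
      · cases t' with
        | nil =>
          rw [List.getLast?_cons_cons, List.append_nil, hml, ← hL'l]; simp
        | cons y yt =>
          rw [List.getLast?_cons_cons (a := ψ), List.getLast?_append_cons, ← hL'l, List.getLast?_cons_cons]
      · refine List.IsChain.append hmc (List.IsChain.tail hL'c) ?_
        intro x hx y hy
        rw [hml] at hx
        obtain rfl : φ = x := by injection hx
        exact (List.isChain_cons.mp hL'c).1 y hy
      · intro χ hχ
        rcases List.mem_append.mp hχ with hχ | hχ
        · exact ⟨φ, by simp, s, hs, hmmem χ hχ⟩
        · obtain ⟨φ', hφ', hdf⟩ := hL'mem χ (by simp [hχ])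
          exact ⟨φ', by simp [List.mem_cons.mp hφ'], hdf⟩

/-- in a constraint graph (edges indexed by `ι`, endpoints `he`, constraints `hc`,
`E` nonempty) where every vertex lies on at most `d` edges, if a sequence of assignments from
`ψi` to `ψt` has consecutive assignments differing on at most `k ≥ 1` vertices and
`val_G(ψi ↭ ψt) < 1 − ε`, then some assignment in the sequence has value
less than `1 − ε + dk/|E|`. -/
theorem interpolation_soundness {V A ι : Type*} [Fintype V] [Fintype A]
    [Fintype ι] [Nonempty ι]
    (he : ι → V × V) (hc : ι → Set (A × A)) (d k : ℕ) (hk : 1 ≤ k)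
    (hdeg : ∀ v : V, Nat.card {i : ι // (he i).1 = v ∨ (he i).2 = v} ≤ d)
    (ε : ℝ) (hε0 : 0 < ε) (hε1 : ε < 1)
    (ψi ψt : V → A) (l : List (V → A)) (hl : l ≠ [])
    (hhead : l.head? = some ψi) (hlast : l.getLast? = some ψt)
    (hchain : l.Chain' (diffLe k))
    (hval : maxValC (fun i ψ => (ψ (he i).1, ψ (he i).2) ∈ hc i) ψi ψt < 1 - ε) :
    ∃ ψ ∈ l, valC (fun i ψ => (ψ (he i).1, ψ (he i).2) ∈ hc i) ψ
      < 1 - ε + ((d : ℝ) * (k : ℝ)) / (Fintype.card ι : ℝ) := by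

  classical
  set sat : ι → (V → A) → Prop := fun i ψ => (ψ (he i).1, ψ (he i).2) ∈ hc i with hsat
  obtain ⟨L, hLne, hLh, hLl, hLc, hLmem⟩ := refine_list k l hl hchain
  have hmem : valSeqC sat L ∈ {r : ℝ | ∃ l : List (V → A), l ≠ [] ∧ l.head? = some ψi ∧
      l.getLast? = some ψt ∧ l.Chain' adjOne ∧ r = valSeqC sat l} :=
    ⟨L, hLne, by rw [hLh, hhead], by rw [hLl, hlast], hLc, rfl⟩
  have hbdd : BddAbove {r : ℝ | ∃ l : List (V → A), l ≠ [] ∧ l.head? = some ψi ∧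
      l.getLast? = some ψt ∧ l.Chain' adjOne ∧ r = valSeqC sat l} := by
    refine ⟨1, fun r hr => ?_⟩
    obtain ⟨l', _, _, _, _, rfl⟩ := hr
    exact foldr_min_le_one _
  have hle : valSeqC sat L ≤ maxValC sat ψi ψt := le_csSup hbdd hmem
  have hlt : valSeqC sat L < 1 - ε := lt_of_le_of_lt hle hval
  have : ∃ χ ∈ L, valC sat χ < 1 - ε := by
    by_contra hcon
    push_neg at hcon
    have : 1 - ε ≤ valSeqC sat L := by
      refine le_foldr_min _ _ (by linarith) ?_
      intro x hx
      obtain ⟨χ, hχ, rfl⟩ := List.mem_map.mp hx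
      exact hcon χ hχ
    linarith
  obtain ⟨χ, hχ, hχval⟩ := this
  obtain ⟨φ, hφ, hdf⟩ := hLmem χ hχ
  refine ⟨φ, hφ, ?_⟩
  have := valC_lip he hc d k hdeg χ φ hdf
  rw [← hsat] at this
  linarith
end

section
/- Let r ≥ 2 be an integer, R = 100r, let d ≥ 1 be an integer, and let λ be a real number with 0 < λ ≤ d/2. Let A be a real symmetric matrix indexed by a finite nonempty set V such that A·𝟙 = d·𝟙 (where 𝟙 is the all-ones vector) and λ(A) ≤ λ. Define A' = Σ_{k=1}^{R} (r−1)^{k−1} r^{R−k} d^{R−k} A^k and d' = (r^R − (r−1)^R)·d^R. Then A'·𝟙 = d'·𝟙 and λ(A') ≤ (4^100/100)·(λ/d)·d'. -/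
/-- For a real square matrix `M` indexed by a finite set `V`, `matLambda M` denotes
`sup {‖Mx‖₂ / ‖x‖₂ : x ∈ ℝ^V, x ≠ 0, ∑ v, x v = 0}`. -/
noncomputable def matLambda {V : Type*} [Fintype V] (M : Matrix V V ℝ) : ℝ :=
  sSup {r : ℝ | ∃ x : V → ℝ, x ≠ 0 ∧ (∑ v, x v) = 0 ∧
    r = Real.sqrt (∑ v, (M.mulVec x v) ^ 2) / Real.sqrt (∑ v, (x v) ^ 2)}


open Finset

/-- Telescoping geometric identity. -/
lemma tele (a b : ℝ) (R : ℕ) :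
    (∑ k ∈ Finset.Icc 1 R, a ^ (k - 1) * b ^ (R - k)) * (b - a) = b ^ R - a ^ R := by
  induction R with
  | zero => simp
  | succ R ih =>
    rw [Finset.sum_Icc_succ_top (by omega : 1 ≤ R + 1)]
    have h : ∀ k ∈ Finset.Icc 1 R, a ^ (k - 1) * b ^ (R + 1 - k)
        = (a ^ (k - 1) * b ^ (R - k)) * b := by
      intro k hk
      simp only [Finset.mem_Icc] at hk
      rw [show R + 1 - k = (R - k) + 1 by omega, pow_succ]
      ring
    rw [Finset.sum_congr rfl h, ← Finset.sum_mul]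
    have : R + 1 - (R + 1) = 0 := by omega
    rw [this, show (R+1) - 1 = R by omega]
    linear_combination b * ih

lemma sq_sum_pos {V : Type*} [Fintype V] {x : V → ℝ} (hx : x ≠ 0) :
    0 < ∑ v, x v ^ 2 := by
  obtain ⟨v, hv⟩ := Function.ne_iff.mp hx
  exact Finset.sum_pos' (fun i _ => sq_nonneg _)
    ⟨v, Finset.mem_univ v, sq_pos_of_ne_zero hv⟩

lemma lamb_set_bdd {V : Type*} [Fintype V] (M : Matrix V V ℝ) :
    BddAbove {r : ℝ | ∃ x : V → ℝ, x ≠ 0 ∧ (∑ v, x v) = 0 ∧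
      r = Real.sqrt (∑ v, (M.mulVec x v) ^ 2) / Real.sqrt (∑ v, (x v) ^ 2)} := by
  refine ⟨Real.sqrt (∑ v, ∑ u, (M v u) ^ 2), ?_⟩
  rintro s ⟨x, hx, -, rfl⟩
  have hxpos : 0 < Real.sqrt (∑ v, x v ^ 2) := Real.sqrt_pos.mpr (sq_sum_pos hx)
  rw [div_le_iff₀ hxpos]
  have h1 : ∑ v, (M.mulVec x v) ^ 2 ≤ (∑ v, ∑ u, (M v u) ^ 2) * ∑ v, x v ^ 2 := by
    rw [Finset.sum_mul]
    refine Finset.sum_le_sum fun v _ => ?_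
    exact Finset.sum_mul_sq_le_sq_mul_sq Finset.univ (fun u => M v u) x
  calc Real.sqrt (∑ v, (M.mulVec x v) ^ 2)
      ≤ Real.sqrt ((∑ v, ∑ u, (M v u) ^ 2) * ∑ v, x v ^ 2) := Real.sqrt_le_sqrt h1
    _ = _ := Real.sqrt_mul (by positivity) _

lemma norm_mulVec_le {V : Type*} [Fintype V] {M : Matrix V V ℝ} {lam : ℝ}
    (h : matLambda M ≤ lam) (x : V → ℝ) (hx : (∑ v, x v) = 0) :
    Real.sqrt (∑ v, (M.mulVec x v) ^ 2) ≤ lam * Real.sqrt (∑ v, (x v) ^ 2) := by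
  rcases eq_or_ne x 0 with rfl | hx0
  · simp [Matrix.mulVec_zero]
  · have hxpos : 0 < Real.sqrt (∑ v, x v ^ 2) := Real.sqrt_pos.mpr (sq_sum_pos hx0)
    have hmem : Real.sqrt (∑ v, (M.mulVec x v) ^ 2) / Real.sqrt (∑ v, (x v) ^ 2)
        ∈ {r : ℝ | ∃ x : V → ℝ, x ≠ 0 ∧ (∑ v, x v) = 0 ∧
          r = Real.sqrt (∑ v, (M.mulVec x v) ^ 2) / Real.sqrt (∑ v, (x v) ^ 2)} :=
      ⟨x, hx0, hx, rfl⟩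
    have := (le_csSup (lamb_set_bdd M) hmem).trans h
    rw [div_le_iff₀ hxpos] at this
    exact this

lemma matLambda_le {V : Type*} [Fintype V] {M : Matrix V V ℝ} {c : ℝ} (hc : 0 ≤ c)
    (h : ∀ x : V → ℝ, x ≠ 0 → (∑ v, x v) = 0 →
      Real.sqrt (∑ v, (M.mulVec x v) ^ 2) ≤ c * Real.sqrt (∑ v, (x v) ^ 2)) :
    matLambda M ≤ c := by
  refine Real.sSup_le ?_ hc
  rintro s ⟨x, hx0, hx, rfl⟩
  have hxpos : 0 < Real.sqrt (∑ v, x v ^ 2) := Real.sqrt_pos.mpr (sq_sum_pos hx0)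
  rw [div_le_iff₀ hxpos]
  exact h x hx0 hx

noncomputable def toE {V : Type*} [Fintype V] (x : V → ℝ) : EuclideanSpace ℝ V :=
  (WithLp.equiv 2 _).symm x

lemma toE_norm {V : Type*} [Fintype V] (x : V → ℝ) :
    ‖toE x‖ = Real.sqrt (∑ v, x v ^ 2) := by
  simp [toE, EuclideanSpace.norm_eq, Real.norm_eq_abs, sq_abs]

lemma toE_sum {V : Type*} [Fintype V] (s : Finset ℕ) (f : ℕ → (V → ℝ)) :
    toE (∑ k ∈ s, f k) = ∑ k ∈ s, toE (f k) := by
  unfold toE; exact map_sum (WithLp.linearEquiv 2 ℝ (V → ℝ)).symm f s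

lemma toE_smul {V : Type*} [Fintype V] (c : ℝ) (x : V → ℝ) :
    toE (c • x) = c • toE x := rfl

lemma two_mul_pow_le (r : ℕ) (hr : 2 ≤ r) : 2 * ((r : ℝ) - 1) ^ r ≤ (r : ℝ) ^ r := by
  have hr2 : (2 : ℝ) ≤ (r : ℝ) := by exact_mod_cast hr
  have h1 : (0 : ℝ) < (r : ℝ) - 1 := by linarith
  have h0 : (0 : ℝ) ≤ 1 / ((r : ℝ) - 1) := by positivity
  have hb : (1 : ℝ) + r * (1 / ((r : ℝ) - 1)) ≤ (1 + 1 / ((r : ℝ) - 1)) ^ r :=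
    one_add_mul_le_pow (by linarith) r
  have h2 : (2 : ℝ) ≤ (1 + 1 / ((r : ℝ) - 1)) ^ r := by
    have hge : (1 : ℝ) ≤ (r : ℝ) * (1 / ((r : ℝ) - 1)) := by
      rw [mul_one_div, le_div_iff₀ h1]; linarith
    linarith
  have h3 : ((r : ℝ) - 1) * (1 + 1 / ((r : ℝ) - 1)) = (r : ℝ) := by field_simp; ring
  calc 2 * ((r : ℝ) - 1) ^ r ≤ (1 + 1 / ((r : ℝ) - 1)) ^ r * ((r : ℝ) - 1) ^ r :=
        mul_le_mul_of_nonneg_right h2 (pow_nonneg h1.le r)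
    _ = (((r : ℝ) - 1) * (1 + 1 / ((r : ℝ) - 1))) ^ r := by rw [mul_pow]; ring
    _ = (r : ℝ) ^ r := by rw [h3]

lemma scalar_bound (r d : ℕ) (hr : 2 ≤ r) (hd : 1 ≤ d)
    (lam : ℝ) (hlam0 : 0 < lam) (hlam : lam ≤ (d : ℝ) / 2) :
    ∑ k ∈ Finset.Icc 1 (100 * r),
        ((r : ℝ) - 1) ^ (k - 1) * (r : ℝ) ^ (100 * r - k) * (d : ℝ) ^ (100 * r - k) * lam ^ k
      ≤ (4 ^ 100 / 100) * (lam / (d : ℝ)) *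
        (((r : ℝ) ^ (100 * r) - ((r : ℝ) - 1) ^ (100 * r)) * (d : ℝ) ^ (100 * r)) := by
  have hr2 : (2 : ℝ) ≤ (r : ℝ) := by exact_mod_cast hr
  have hd1 : (1 : ℝ) ≤ (d : ℝ) := by exact_mod_cast hd
  have hdpos : (0 : ℝ) < (d : ℝ) := by linarith
  have hR : 1 ≤ 100 * r := by omega
  set R := 100 * r with hRdef
  -- step A: termwise bound
  have stepA : ∀ k ∈ Finset.Icc 1 R,
      ((r : ℝ) - 1) ^ (k - 1) * (r : ℝ) ^ (R - k) * (d : ℝ) ^ (R - k) * lam ^ k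
        ≤ lam * (d : ℝ) ^ (R - 1) * ((((r : ℝ) - 1) / 2) ^ (k - 1) * (r : ℝ) ^ (R - k)) := by
    intro k hk
    simp only [Finset.mem_Icc] at hk
    have h1 : lam ^ k ≤ lam * ((d : ℝ) / 2) ^ (k - 1) := by
      have : lam ^ k = lam * lam ^ (k - 1) := by
        rw [← pow_succ']; congr 1; omega
      rw [this]
      exact mul_le_mul_of_nonneg_left (pow_le_pow_left₀ hlam0.le hlam _) hlam0.le
    have hnn : (0 : ℝ) ≤ ((r : ℝ) - 1) ^ (k - 1) * (r : ℝ) ^ (R - k) * (d : ℝ) ^ (R - k) := by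
      have : (0:ℝ) ≤ (r:ℝ) - 1 := by linarith
      positivity
    calc ((r : ℝ) - 1) ^ (k - 1) * (r : ℝ) ^ (R - k) * (d : ℝ) ^ (R - k) * lam ^ k
        ≤ ((r : ℝ) - 1) ^ (k - 1) * (r : ℝ) ^ (R - k) * (d : ℝ) ^ (R - k) *
            (lam * ((d : ℝ) / 2) ^ (k - 1)) := mul_le_mul_of_nonneg_left h1 hnn
      _ = lam * (d : ℝ) ^ (R - 1) * ((((r : ℝ) - 1) / 2) ^ (k - 1) * (r : ℝ) ^ (R - k)) := by
          rw [div_pow, div_pow]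
          have hdd : (d : ℝ) ^ (R - k) * (d : ℝ) ^ (k - 1) = (d : ℝ) ^ (R - 1) := by
            rw [← pow_add]; congr 1; omega
          rw [← hdd]; ring
  -- step B: geometric sum bound
  have ha : (0 : ℝ) ≤ ((r : ℝ) - 1) / 2 := by linarith
  have stepB : ∑ k ∈ Finset.Icc 1 R, (((r : ℝ) - 1) / 2) ^ (k - 1) * (r : ℝ) ^ (R - k)
      ≤ (r : ℝ) ^ R := by
    set a := ((r : ℝ) - 1) / 2 with hadef
    set S := ∑ k ∈ Finset.Icc 1 R, a ^ (k - 1) * (r : ℝ) ^ (R - k) with hSdef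
    have hS0 : 0 ≤ S := Finset.sum_nonneg fun k _ => by positivity
    have hba : (1 : ℝ) ≤ (r : ℝ) - a := by rw [hadef]; linarith
    have htel := tele a (r : ℝ) R
    have haR : (0 : ℝ) ≤ a ^ R := by positivity
    nlinarith [le_mul_of_one_le_right hS0 hba]
  have hdR1 : (0:ℝ) ≤ lam * (d : ℝ) ^ (R - 1) := by positivity
  have main1 : ∑ k ∈ Finset.Icc 1 R,
      ((r : ℝ) - 1) ^ (k - 1) * (r : ℝ) ^ (R - k) * (d : ℝ) ^ (R - k) * lam ^ k
        ≤ lam * (d : ℝ) ^ (R - 1) * (r : ℝ) ^ R := by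
    calc _ ≤ ∑ k ∈ Finset.Icc 1 R,
          lam * (d : ℝ) ^ (R - 1) * ((((r : ℝ) - 1) / 2) ^ (k - 1) * (r : ℝ) ^ (R - k)) :=
        Finset.sum_le_sum stepA
      _ = lam * (d : ℝ) ^ (R - 1) *
          ∑ k ∈ Finset.Icc 1 R, (((r : ℝ) - 1) / 2) ^ (k - 1) * (r : ℝ) ^ (R - k) := by
        rw [Finset.mul_sum]
      _ ≤ _ := mul_le_mul_of_nonneg_left stepB hdR1
  -- step C
  refine main1.trans ?_
  have hQ : ((r : ℝ) - 1) ^ R ≤ (r : ℝ) ^ R / 2 ^ 100 := by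
    have h2 := two_mul_pow_le r hr
    have hrm1 : (0:ℝ) ≤ (r:ℝ) - 1 := by linarith
    have e1 : ((r : ℝ) - 1) ^ R = (((r : ℝ) - 1) ^ r) ^ 100 := by
      rw [← pow_mul]; congr 1; omega
    have e2 : (r : ℝ) ^ R = ((r : ℝ) ^ r) ^ 100 := by
      rw [← pow_mul]; congr 1; omega
    rw [e1, e2]
    calc (((r : ℝ) - 1) ^ r) ^ 100 ≤ ((r : ℝ) ^ r / 2) ^ 100 := by
          apply pow_le_pow_left₀ (by positivity)
          linarith
      _ = ((r : ℝ) ^ r) ^ 100 / 2 ^ 100 := by rw [div_pow]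
  have hPpos : (0 : ℝ) < (r : ℝ) ^ R := by positivity
  have hgap : (r : ℝ) ^ R / 2 ≤ (r : ℝ) ^ R - ((r : ℝ) - 1) ^ R := by
    have h100 : (2:ℝ) ≤ (2:ℝ)^100 := by norm_num
    have : (r : ℝ) ^ R / 2 ^ 100 ≤ (r : ℝ) ^ R / 2 :=
      div_le_div_of_nonneg_left hPpos.le (by norm_num) h100
    linarith
  have hdRd : (d : ℝ) ^ R = (d : ℝ) ^ (R - 1) * (d : ℝ) := by
    rw [← pow_succ]; congr 1; omega
  have hbig : (4 : ℝ) ≤ 4 ^ 100 / 100 := by norm_num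
  have key : (r : ℝ) ^ R ≤ (4 ^ 100 / 100) * ((r : ℝ) ^ R - ((r : ℝ) - 1) ^ R) := by
    nlinarith [hgap, hPpos]
  calc lam * (d : ℝ) ^ (R - 1) * (r : ℝ) ^ R
      ≤ lam * (d : ℝ) ^ (R - 1) * ((4 ^ 100 / 100) * ((r : ℝ) ^ R - ((r : ℝ) - 1) ^ R)) :=
        mul_le_mul_of_nonneg_left key hdR1
    _ = (4 ^ 100 / 100) * (lam / (d : ℝ)) *
        (((r : ℝ) ^ R - ((r : ℝ) - 1) ^ R) * (d : ℝ) ^ R) := by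
        rw [hdRd]; field_simp

/-- let `r ≥ 2`, `R = 100r`, `d ≥ 1`, `0 < λ ≤ d/2`, and let `A` be a real
symmetric matrix with `A·𝟙 = d·𝟙` and `λ(A) ≤ λ`.  With
`A' = ∑_{k=1}^{R} (r−1)^{k−1} r^{R−k} d^{R−k} A^k` and `d' = (r^R − (r−1)^R)·d^R`,
we have `A'·𝟙 = d'·𝟙` and `λ(A') ≤ (4^100/100)·(λ/d)·d'`. -/
theorem powered_matrix {V : Type*} [Fintype V] [DecidableEq V] [Nonempty V]
    (r d : ℕ) (hr : 2 ≤ r) (hd : 1 ≤ d)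
    (lam : ℝ) (hlam0 : 0 < lam) (hlam : lam ≤ (d : ℝ) / 2)
    (A : Matrix V V ℝ) (hsymm : A.IsSymm)
    (hreg : A.mulVec (fun _ => (1 : ℝ)) = fun _ => (d : ℝ))
    (hA : matLambda A ≤ lam) :
    (∑ k ∈ Finset.Icc 1 (100 * r),
        (((r : ℝ) - 1) ^ (k - 1) * (r : ℝ) ^ (100 * r - k) * (d : ℝ) ^ (100 * r - k)) •
          A ^ k).mulVec (fun _ => (1 : ℝ))
      = (fun _ => ((r : ℝ) ^ (100 * r) - ((r : ℝ) - 1) ^ (100 * r)) * (d : ℝ) ^ (100 * r)) ∧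
    matLambda (∑ k ∈ Finset.Icc 1 (100 * r),
        (((r : ℝ) - 1) ^ (k - 1) * (r : ℝ) ^ (100 * r - k) * (d : ℝ) ^ (100 * r - k)) • A ^ k)
      ≤ (4 ^ 100 / 100) * (lam / (d : ℝ)) *
        (((r : ℝ) ^ (100 * r) - ((r : ℝ) - 1) ^ (100 * r)) * (d : ℝ) ^ (100 * r)) := by
  have hr2 : (2 : ℝ) ≤ (r : ℝ) := by exact_mod_cast hr
  have hd1 : (1 : ℝ) ≤ (d : ℝ) := by exact_mod_cast hd
  have hdpos : (0 : ℝ) < (d : ℝ) := by linarith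
  set R := 100 * r with hRdef
  set c : ℕ → ℝ := fun k =>
    ((r : ℝ) - 1) ^ (k - 1) * (r : ℝ) ^ (R - k) * (d : ℝ) ^ (R - k) with hcdef
  have hcnn : ∀ k, 0 ≤ c k := fun k => by
    have : (0:ℝ) ≤ (r:ℝ) - 1 := by linarith
    positivity
  -- mulVec of a finite sum of matrices
  have hsum_mulVec : ∀ (s : Finset ℕ) (M : ℕ → Matrix V V ℝ) (x : V → ℝ),
      (∑ k ∈ s, M k).mulVec x = ∑ k ∈ s, (M k).mulVec x := by
    intro s M x
    refine Finset.induction_on s ?_ ?_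
    · simp
    · intro a t ha ih
      rw [Finset.sum_insert ha, Finset.sum_insert ha, Matrix.add_mulVec, ih]
  -- A^k on the all-ones vector
  have hpow : ∀ k : ℕ, (A ^ k).mulVec (fun _ => (1 : ℝ)) = fun _ => ((d : ℝ)) ^ k := by
    intro k
    induction k with
    | zero => simp [Matrix.one_mulVec]
    | succ k ih =>
      have h1 : (fun _ : V => (d : ℝ)) = (d : ℝ) • (fun _ : V => (1 : ℝ)) := by
        funext v; simp
      rw [pow_succ, ← Matrix.mulVec_mulVec, hreg, h1, Matrix.mulVec_smul, ih]
      funext v; simp [pow_succ]; ring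
  -- regularity of A'
  have part1 : (∑ k ∈ Finset.Icc 1 R, c k • A ^ k).mulVec (fun _ => (1 : ℝ))
      = fun _ => ((r : ℝ) ^ R - ((r : ℝ) - 1) ^ R) * (d : ℝ) ^ R := by
    rw [hsum_mulVec]
    funext v
    have : ∀ k, (c k • A ^ k).mulVec (fun _ => (1 : ℝ)) = fun _ => c k * (d : ℝ) ^ k := by
      intro k
      rw [Matrix.smul_mulVec, hpow]
      funext w; simp
    simp only [this]
    have hval : ∀ w : V, (∑ k ∈ Finset.Icc 1 R, (fun _ : V => c k * (d : ℝ) ^ k)) v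
        = ∑ k ∈ Finset.Icc 1 R, c k * (d : ℝ) ^ k := by
      intro w; simp
    rw [Finset.sum_apply]
    have hterm : ∀ k ∈ Finset.Icc 1 R, c k * (d : ℝ) ^ k
        = (((r : ℝ) - 1) ^ (k - 1) * (r : ℝ) ^ (R - k)) * (d : ℝ) ^ R := by
      intro k hk
      simp only [Finset.mem_Icc] at hk
      have : (d : ℝ) ^ (R - k) * (d : ℝ) ^ k = (d : ℝ) ^ R := by
        rw [← pow_add]; congr 1; omega
      simp only [hcdef]
      rw [mul_assoc, this]
    rw [Finset.sum_congr rfl hterm, ← Finset.sum_mul]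
    have htel := tele ((r : ℝ) - 1) (r : ℝ) R
    have : (r : ℝ) - ((r : ℝ) - 1) = 1 := by ring
    rw [this, mul_one] at htel
    rw [htel]
  refine ⟨part1, ?_⟩
  -- sum preservation by A
  have hAsum : ∀ x : V → ℝ, (∑ v, x v) = 0 → (∑ v, A.mulVec x v) = 0 := by
    intro x hx
    have hcol : ∀ u, (∑ v, A v u) = (d : ℝ) := by
      intro u
      have h := congrFun hreg u
      simp only [Matrix.mulVec, dotProduct, mul_one] at h
      calc ∑ v, A v u = ∑ v, A u v := by
            refine Finset.sum_congr rfl fun v _ => ?_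
            exact (hsymm.apply u v).symm ▸ rfl
        _ = (d : ℝ) := h
    calc ∑ v, A.mulVec x v = ∑ v, ∑ u, A v u * x u := by
          simp [Matrix.mulVec, dotProduct]
      _ = ∑ u, (∑ v, A v u) * x u := by
          rw [Finset.sum_comm]; simp [Finset.sum_mul]
      _ = ∑ u, (d : ℝ) * x u := by simp only [hcol]
      _ = 0 := by rw [← Finset.mul_sum, hx, mul_zero]
  -- iterated bound
  have key : ∀ (k : ℕ) (x : V → ℝ), (∑ v, x v) = 0 →
      (∑ v, (A ^ k).mulVec x v) = 0 ∧
      Real.sqrt (∑ v, ((A ^ k).mulVec x v) ^ 2)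
        ≤ lam ^ k * Real.sqrt (∑ v, (x v) ^ 2) := by
    intro k
    induction k with
    | zero => intro x hx; simp [Matrix.one_mulVec, hx]
    | succ k ih =>
      intro x hx
      obtain ⟨hy1, hy2⟩ := ih x hx
      have hrw : (A ^ (k + 1)).mulVec x = A.mulVec ((A ^ k).mulVec x) := by
        rw [pow_succ', Matrix.mulVec_mulVec]
      constructor
      · rw [hrw]; exact hAsum _ hy1
      · rw [hrw]
        calc Real.sqrt (∑ v, (A.mulVec ((A ^ k).mulVec x) v) ^ 2)
            ≤ lam * Real.sqrt (∑ v, ((A ^ k).mulVec x v) ^ 2) := norm_mulVec_le hA _ hy1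
          _ ≤ lam * (lam ^ k * Real.sqrt (∑ v, (x v) ^ 2)) :=
              mul_le_mul_of_nonneg_left hy2 hlam0.le
          _ = lam ^ (k + 1) * Real.sqrt (∑ v, (x v) ^ 2) := by rw [pow_succ]; ring
  -- the final bound
  have hd'nn : (0 : ℝ) ≤ (4 ^ 100 / 100) * (lam / (d : ℝ)) *
      (((r : ℝ) ^ R - ((r : ℝ) - 1) ^ R) * (d : ℝ) ^ R) := by
    have h1 : ((r : ℝ) - 1) ^ R ≤ (r : ℝ) ^ R :=
      pow_le_pow_left₀ (by linarith) (by linarith) R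
    have h2 : (0:ℝ) ≤ (r : ℝ) ^ R - ((r : ℝ) - 1) ^ R := by linarith
    positivity
  apply matLambda_le hd'nn
  intro x hx0 hx
  have exp : (∑ k ∈ Finset.Icc 1 R, c k • A ^ k).mulVec x
      = ∑ k ∈ Finset.Icc 1 R, c k • ((A ^ k).mulVec x) := by
    rw [hsum_mulVec]
    exact Finset.sum_congr rfl fun k _ => Matrix.smul_mulVec _ _ _
  calc Real.sqrt (∑ v, ((∑ k ∈ Finset.Icc 1 R, c k • A ^ k).mulVec x v) ^ 2)
      = ‖toE ((∑ k ∈ Finset.Icc 1 R, c k • A ^ k).mulVec x)‖ := (toE_norm _).symm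
    _ = ‖∑ k ∈ Finset.Icc 1 R, toE (c k • ((A ^ k).mulVec x))‖ := by
        rw [exp, toE_sum]
    _ ≤ ∑ k ∈ Finset.Icc 1 R, ‖toE (c k • ((A ^ k).mulVec x))‖ := norm_sum_le _ _
    _ = ∑ k ∈ Finset.Icc 1 R, c k * Real.sqrt (∑ v, ((A ^ k).mulVec x v) ^ 2) := by
        refine Finset.sum_congr rfl fun k _ => ?_
        rw [toE_smul, norm_smul, Real.norm_eq_abs, abs_of_nonneg (hcnn k), toE_norm]
    _ ≤ ∑ k ∈ Finset.Icc 1 R, c k * (lam ^ k * Real.sqrt (∑ v, (x v) ^ 2)) := by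
        refine Finset.sum_le_sum fun k _ => ?_
        exact mul_le_mul_of_nonneg_left (key k x hx).2 (hcnn k)
    _ = (∑ k ∈ Finset.Icc 1 R, c k * lam ^ k) * Real.sqrt (∑ v, (x v) ^ 2) := by
        rw [Finset.sum_mul]; refine Finset.sum_congr rfl fun k _ => by ring
    _ ≤ ((4 ^ 100 / 100) * (lam / (d : ℝ)) *
        (((r : ℝ) ^ R - ((r : ℝ) - 1) ^ R) * (d : ℝ) ^ R)) * Real.sqrt (∑ v, (x v) ^ 2) := by
        refine mul_le_mul_of_nonneg_right ?_ (Real.sqrt_nonneg _)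
        exact scalar_bound r d hr hd lam hlam0 hlam
end

section
/- In the q-CSP-to-2-CSP construction with E nonempty: for every ε ∈ (0,1), if val_G(ψ^ini ↭ ψ^tar) < 1 − ε, then for all assignments ψ'^ini compatible with ψ^ini and ψ'^tar compatible with ψ^tar it holds that val_{G'}(ψ'^ini ↭ ψ'^tar) < 1 − ε/q. -/
/-- The singleton element of the squared alphabet. -/
def sing {A : Type*} (a : A) : Sq A := ⟨{a}, by simp⟩

/-- Satisfaction predicate of a `q`-ary constraint graph with hyperedges indexed by `ι`:
hyperedge `i` has scope `he i : Fin q → V` and constraint `hc i ⊆ Σ^q`. -/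
def qSat {V A ι : Type*} (q : ℕ) (he : ι → Fin q → V) (hc : ι → Set (Fin q → A)) :
    ι → (V → A) → Prop :=
  fun i ψ => (fun j => ψ (he i j)) ∈ hc i

/-- Satisfaction predicate of the binary constraint graph `G'` of the q-CSP-to-2-CSP
construction: vertex set `V ⊕ ι`, alphabet `(Sq A)^q`, one edge `(he i j, i)` per pair
`(i, j) : ι × Fin q`, accepting `(a, b)` iff `a[1] ⊆ b[j]` and `b[1] × ⋯ × b[q] ⊆ hc i`. -/
def bSat {V A ι : Type*} (q : ℕ) (hq : 0 < q) (he : ι → Fin q → V)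
    (hc : ι → Set (Fin q → A)) :
    ι × Fin q → ((V ⊕ ι) → (Fin q → Sq A)) → Prop :=
  fun p ψ' =>
    (ψ' (Sum.inl (he p.1 p.2)) ⟨0, hq⟩).1 ⊆ (ψ' (Sum.inr p.1) p.2).1 ∧
    ∀ f : Fin q → A, (∀ k, f k ∈ (ψ' (Sum.inr p.1) k).1) → f ∈ hc p.1

/-- `ψ'` is compatible with `ψ`: `ψ'(v)[1] = {ψ(v)}` for every vertex `v`, and
`ψ'(e)[j] = {ψ(v_j)}` for every hyperedge `e = (v_1, …, v_q)` and coordinate `j`. -/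
def Compat {V A ι : Type*} (q : ℕ) (hq : 0 < q) (he : ι → Fin q → V)
    (ψ : V → A) (ψ' : (V ⊕ ι) → (Fin q → Sq A)) : Prop :=
  (∀ v : V, ψ' (Sum.inl v) ⟨0, hq⟩ = sing (ψ v)) ∧
  (∀ (i : ι) (j : Fin q), ψ' (Sum.inr i) j = sing (ψ (he i j)))

-- aux
noncomputable def pickEl {A : Type*} (s : Sq A) : A :=
  (Finset.card_pos.mp s.2.1).choose

lemma pickEl_mem {A : Type*} (s : Sq A) : pickEl s ∈ s.1 :=
  (Finset.card_pos.mp s.2.1).choose_spec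

lemma pickEl_sing {A : Type*} (a : A) : pickEl (sing a) = a := by
  have := pickEl_mem (sing a)
  simpa [sing] using this

noncomputable def extA {V A ι : Type*} (q : ℕ) (hq : 0 < q)
    (ψ' : (V ⊕ ι) → (Fin q → Sq A)) : V → A :=
  fun v => pickEl (ψ' (Sum.inl v) ⟨0, hq⟩)

lemma valC_le_one {V A ι : Type*} [Fintype ι] (sat : ι → (V → A) → Prop) (ψ : V → A) :
    valC sat ψ ≤ 1 := by
  unfold valC
  rcases Nat.eq_zero_or_pos (Fintype.card ι) with h | h
  · simp [h]
  · rw [div_le_one (by positivity)]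
    have h2 : Nat.card {i : ι // sat i ψ} ≤ Nat.card ι :=
      Nat.card_le_card_of_injective Subtype.val Subtype.val_injective
    exact_mod_cast h2.trans_eq Nat.card_eq_fintype_card

lemma valSeqC_le_one {V A ι : Type*} [Fintype ι] (sat : ι → (V → A) → Prop)
    (l : List (V → A)) : valSeqC sat l ≤ 1 := by
  induction l with
  | nil => simp [valSeqC]
  | cons a l ih => simpa [valSeqC] using Or.inr ih

lemma valSeqC_le_of_mem {V A ι : Type*} [Fintype ι] (sat : ι → (V → A) → Prop)
    {l : List (V → A)} {ψ : V → A} (h : ψ ∈ l) : valSeqC sat l ≤ valC sat ψ := by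
  induction l with
  | nil => simp at h
  | cons a l ih =>
    rcases List.mem_cons.mp h with rfl | h
    · simp [valSeqC]
    · simpa [valSeqC] using Or.inr (ih h)

lemma le_valSeqC {V A ι : Type*} [Fintype ι] (sat : ι → (V → A) → Prop)
    {l : List (V → A)} {c : ℝ} (hc : c ≤ 1) (h : ∀ ψ ∈ l, c ≤ valC sat ψ) :
    c ≤ valSeqC sat l := by
  induction l with
  | nil => simpa [valSeqC]
  | cons a l ih =>
    have : valSeqC sat (a :: l) = min (valC sat a) (valSeqC sat l) := rfl
    rw [this]
    exact le_min (h a (by simp)) (ih fun ψ hm => h ψ (by simp [hm]))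

lemma valSeqC_mem {V A ι : Type*} [Fintype ι] (sat : ι → (V → A) → Prop)
    (l : List (V → A)) : valSeqC sat l ∈ insert (1:ℝ) (Set.range (valC sat)) := by
  induction l with
  | nil => simp [valSeqC]
  | cons a l ih =>
    have : valSeqC sat (a :: l) = min (valC sat a) (valSeqC sat l) := rfl
    rw [this]
    rcases min_choice (valC sat a) (valSeqC sat l) with h | h <;> rw [h]
    · exact Set.mem_insert_of_mem _ ⟨a, rfl⟩
    · exact ih

lemma extA_compat {V A ι : Type*} (q : ℕ) (hq : 0 < q) (he : ι → Fin q → V)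
    (ψ : V → A) (ψ' : (V ⊕ ι) → (Fin q → Sq A)) (h : Compat q hq he ψ ψ') :
    extA q hq ψ' = ψ := by
  funext v
  rw [extA, h.1 v, pickEl_sing]

lemma adjOne_ext {V A ι : Type*} [Nonempty V] (q : ℕ) (hq : 0 < q)
    {ψ' φ' : (V ⊕ ι) → (Fin q → Sq A)} (h : adjOne ψ' φ') :
    adjOne (extA q hq ψ') (extA q hq φ') := by
  obtain ⟨v0, h⟩ := h
  cases v0 with
  | inl w =>
    exact ⟨w, fun v hv => by rw [extA, extA, h (Sum.inl v) (by simpa using hv)]⟩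
  | inr i =>
    exact ⟨Classical.arbitrary V, fun v _ => by rw [extA, extA, h (Sum.inl v) (by simp)]⟩

lemma card_unsat_le {V A ι : Type*} [Fintype ι] [DecidableEq A] (q : ℕ) (hq : 0 < q)
    (he : ι → Fin q → V) (hc : ι → Set (Fin q → A))
    (ψ' : (V ⊕ ι) → Fin q → Sq A) :
    Nat.card {i : ι // ¬ qSat q he hc i (extA q hq ψ')} ≤
    Nat.card {p : ι × Fin q // ¬ bSat q hq he hc p ψ'} := by
  have key : ∀ i : ι, ¬ qSat q he hc i (extA q hq ψ') →
      ∃ j : Fin q, ¬ bSat q hq he hc (i, j) ψ' := by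
    intro i hi
    by_contra hcon
    push_neg at hcon
    apply hi
    have hmem : ∀ k : Fin q, extA q hq ψ' (he i k) ∈ (ψ' (Sum.inr i) k).1 := by
      intro k
      exact (hcon k).1 (pickEl_mem _)
    exact (hcon ⟨0, hq⟩).2 _ hmem
  have : Function.Injective
      (fun x : {i : ι // ¬ qSat q he hc i (extA q hq ψ')} =>
        (⟨(x.1, (key x.1 x.2).choose), (key x.1 x.2).choose_spec⟩ :
          {p : ι × Fin q // ¬ bSat q hq he hc p ψ'})) := by
    intro x y hxy
    have := congrArg (fun z => z.1.1) hxy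
    exact Subtype.ext this
  exact Nat.card_le_card_of_injective _ this

lemma nat_card_compl {ι : Type*} [Fintype ι] (p : ι → Prop) :
    (Nat.card {i // p i} : ℝ) = (Fintype.card ι : ℝ) - (Nat.card {i // ¬ p i} : ℝ) := by
  classical
  rw [Nat.card_eq_fintype_card, Nat.card_eq_fintype_card, Fintype.card_subtype_compl]
  have h := Fintype.card_subtype_le p
  push_cast [Nat.cast_sub h]
  ring

lemma valC_ext_ge {V A ι : Type*} [Fintype ι] [Nonempty ι] [DecidableEq A]
    (q : ℕ) (hq : 0 < q) (he : ι → Fin q → V) (hc : ι → Set (Fin q → A))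
    (ψ' : (V ⊕ ι) → Fin q → Sq A) :
    1 - (q : ℝ) * (1 - valC (bSat q hq he hc) ψ') ≤
      valC (qSat q he hc) (extA q hq ψ') := by
  have hn : (0:ℝ) < Fintype.card ι := by exact_mod_cast Fintype.card_pos
  have hqr : (0:ℝ) < q := by exact_mod_cast hq
  have hN : (Fintype.card (ι × Fin q) : ℝ) = (Fintype.card ι : ℝ) * q := by
    rw [Fintype.card_prod, Fintype.card_fin]; push_cast; ring
  have hle := card_unsat_le q hq he hc ψ'
  have hle' : (Nat.card {i : ι // ¬ qSat q he hc i (extA q hq ψ')} : ℝ) ≤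
      (Nat.card {p : ι × Fin q // ¬ bSat q hq he hc p ψ'} : ℝ) := by exact_mod_cast hle
  set uG := (Nat.card {i : ι // ¬ qSat q he hc i (extA q hq ψ')} : ℝ) with huG
  set uE := (Nat.card {p : ι × Fin q // ¬ bSat q hq he hc p ψ'} : ℝ) with huE
  have e1 : (Nat.card {p : ι × Fin q // bSat q hq he hc p ψ'} : ℝ)
      = (Fintype.card (ι × Fin q) : ℝ) - uE := nat_card_compl _
  have e2 : (Nat.card {i : ι // qSat q he hc i (extA q hq ψ')} : ℝ)
      = (Fintype.card ι : ℝ) - uG := nat_card_compl _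
  rw [valC, valC, e1, e2, hN]
  have harith : 1 - (q:ℝ) * (1 - ((Fintype.card ι:ℝ) * q - uE)/((Fintype.card ι:ℝ) * q))
      = ((Fintype.card ι:ℝ) - uE)/(Fintype.card ι:ℝ) := by
    field_simp
    ring
  rw [harith, div_le_div_iff₀ hn hn]
  nlinarith


/-- soundness of the q-CSP-to-2-CSP construction (with `E` indexed by a
nonempty `ι`): if `val_G(ψi ↭ ψt) < 1 − ε`, then for all compatible `ψ'i, ψ't`,
`val_{G'}(ψ'i ↭ ψ't) < 1 − ε/q`. -/
theorem qcsp_to_twocsp_soundness {V A ι : Type*} [Fintype V] [Fintype A] [DecidableEq A]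
    [Fintype ι] [Nonempty ι]
    (q : ℕ) (hq : 2 ≤ q) (he : ι → Fin q → V) (hc : ι → Set (Fin q → A))
    (ε : ℝ) (hε0 : 0 < ε) (hε1 : ε < 1)
    (ψi ψt : V → A)
    (hψi : ∀ i, qSat q he hc i ψi) (hψt : ∀ i, qSat q he hc i ψt)
    (hval : maxValC (qSat q he hc) ψi ψt < 1 - ε) :
    ∀ ψ'i ψ't : (V ⊕ ι) → (Fin q → Sq A),
      Compat q (by omega) he ψi ψ'i → Compat q (by omega) he ψt ψ't →
      maxValC (bSat q (by omega) he hc) ψ'i ψ't < 1 - ε / (q : ℝ) := by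
  intro ψ'i ψ't hci hct
  have hq0 : 0 < q := by omega
  have hVne : Nonempty V := ⟨he (Classical.arbitrary ι) ⟨0, hq0⟩⟩
  have hqr : (0:ℝ) < q := by exact_mod_cast hq0
  have hq2 : (2:ℝ) ≤ q := by exact_mod_cast hq
  have hbound : 0 < 1 - ε / q := by
    have : ε / q < 1 := by rw [div_lt_one hqr]; linarith
    linarith
  set bS := bSat q hq0 he hc with hbS
  set qS := qSat q he hc with hqS
  set S : Set ℝ := {r : ℝ | ∃ l : List ((V ⊕ ι) → (Fin q → Sq A)), l ≠ [] ∧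
    l.head? = some ψ'i ∧ l.getLast? = some ψ't ∧ l.Chain' adjOne ∧ r = valSeqC bS l}
      with hS
  have hmax : maxValC bS ψ'i ψ't = sSup S := rfl
  have hclaim : ∀ r ∈ S, r < 1 - ε / q := by
    rintro r ⟨l', hne, hhead, hlast, hchain, rfl⟩
    set l : List (V → A) := l'.map (extA q hq0) with hl
    have hGset : valSeqC qS l ∈ {r : ℝ | ∃ l : List (V → A), l ≠ [] ∧
        l.head? = some ψi ∧ l.getLast? = some ψt ∧ l.Chain' adjOne ∧ r = valSeqC qS l} := by
      refine ⟨l, by simpa [hl] using hne, ?_, ?_, ?_, rfl⟩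
      · rw [hl, List.head?_map, hhead, Option.map_some]
        rw [extA_compat q hq0 he ψi ψ'i hci]
      · rw [hl, List.getLast?_map, hlast, Option.map_some]
        rw [extA_compat q hq0 he ψt ψ't hct]
      · exact List.isChain_map_of_isChain _ (fun a b h => adjOne_ext q hq0 h) hchain
    have hbdd : BddAbove {r : ℝ | ∃ l : List (V → A), l ≠ [] ∧
        l.head? = some ψi ∧ l.getLast? = some ψt ∧ l.Chain' adjOne ∧ r = valSeqC qS l} := by
      refine ⟨1, ?_⟩
      rintro x ⟨l, _, _, _, _, rfl⟩
      exact valSeqC_le_one qS l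
    have h1 : valSeqC qS l ≤ maxValC qS ψi ψt := le_csSup hbdd hGset
    set r := valSeqC bS l' with hr
    have hr1 : r ≤ 1 := valSeqC_le_one bS l'
    have h2 : 1 - (q:ℝ) * (1 - r) ≤ valSeqC qS l := by
      apply le_valSeqC
      · nlinarith
      · intro ψ hψ
        rw [hl] at hψ
        obtain ⟨ψ'', hψ''mem, rfl⟩ := List.mem_map.mp hψ
        have hrle : r ≤ valC bS ψ'' := valSeqC_le_of_mem bS hψ''mem
        have := valC_ext_ge q hq0 he hc ψ''
        rw [← hbS, ← hqS] at this
        nlinarith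
    have hlt : 1 - (q:ℝ) * (1 - r) < 1 - ε := lt_of_le_of_lt (h2.trans h1) hval
    have h3 : ε / q < 1 - r := (div_lt_iff₀ hqr).mpr (by nlinarith)
    linarith
  have hsub : S ⊆ insert (1:ℝ) (Set.range (valC bS)) := by
    rintro r ⟨l, _, _, _, _, rfl⟩
    exact valSeqC_mem bS l
  have hfin : S.Finite := ((Set.finite_range _).insert 1).subset hsub
  rw [hmax]
  rcases S.eq_empty_or_nonempty with hSe | hSne
  · rw [hSe, Real.sSup_empty]; linarith
  · exact hclaim _ (hSne.csSup_mem hfin)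
end

section
/- Let G = (V, E, Σ, Π) be a constraint graph and let C ⊆ V × Σ be a cover of the Lund–Yannakakis system. Then for every edge e = (v,w) ∈ E there exist α ∈ L_v(C) and β ∈ L_w(C) with (α, β) ∈ π_e. In particular, if every vertex of V lies on at least one edge, then L_v(C) ≠ ∅ for every v ∈ V. -/
/-- The Lund–Yannakakis set `S_{v,α}` in the universe `E × B` (with `B = {0,1}^Σ` modeled as
`A → Bool`): the union of `{e} × Q̄_α` over edges `e ∈ E` with first endpoint `v`, together
with `{e} × Q_{π_e⁻¹(α)}` over edges `e ∈ E` with second endpoint `v`. -/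
def LYSet {V A : Type*} (E : Finset (V × V)) (π : V × V → Set (A × A)) (v : V) (α : A) :
    Set ((V × V) × (A → Bool)) :=
  {p | p.1 ∈ E ∧ ((p.1.1 = v ∧ p.2 α = false) ∨
    (p.1.2 = v ∧ ∃ γ, (γ, α) ∈ π p.1 ∧ p.2 γ = true))}

/-- `C ⊆ V × Σ` is a cover of the Lund–Yannakakis system: the sets `S_{v,α}` for
`(v, α) ∈ C` cover the universe `E × B`. -/
def IsLYCover {V A : Type*} (E : Finset (V × V)) (π : V × V → Set (A × A))
    (C : Finset (V × A)) : Prop :=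
  ∀ p : (V × V) × (A → Bool), p.1 ∈ E → ∃ va ∈ C, p ∈ LYSet E π va.1 va.2

/-- if `C` is a cover of the Lund–Yannakakis system then every edge
`e = (v, w) ∈ E` is satisfied by some `α ∈ L_v(C)` and `β ∈ L_w(C)`; in particular, if
every vertex lies on at least one edge then `L_v(C) ≠ ∅` for every `v`. -/
theorem cover_yields_satisfied_edges {V A : Type*}
    (E : Finset (V × V)) (π : V × V → Set (A × A)) (C : Finset (V × A))
    (hC : IsLYCover E π C) :
    (∀ e ∈ E, ∃ α β : A, (e.1, α) ∈ C ∧ (e.2, β) ∈ C ∧ (α, β) ∈ π e) ∧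
    ((∀ v : V, ∃ e ∈ E, e.1 = v ∨ e.2 = v) → ∀ v : V, ∃ α, (v, α) ∈ C) := by
  classical
  have main : ∀ e ∈ E, ∃ α β : A, (e.1, α) ∈ C ∧ (e.2, β) ∈ C ∧ (α, β) ∈ π e := by
    intro e he
    set q : A → Bool := fun γ => decide ((e.1, γ) ∈ C) with hq
    obtain ⟨va, hvaC, hpE, hcase⟩ := hC (e, q) he
    rcases hcase with ⟨h1, h2⟩ | ⟨h1, γ, hγπ, hγq⟩ <;> dsimp only at h1
    · exfalso
      have : q va.2 = true := by
        have : (e.1, va.2) ∈ C := by rw [h1, Prod.mk.eta]; exact hvaC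
        simp [hq, this]
      have h2' : q va.2 = false := h2
      rw [h2'] at this; exact Bool.false_ne_true this
    · refine ⟨γ, va.2, ?_, ?_, hγπ⟩
      · have hγq' : q γ = true := hγq
        simpa [hq] using hγq'
      · rw [h1, Prod.mk.eta]; exact hvaC
  refine ⟨main, fun hdeg v => ?_⟩
  obtain ⟨e, he, hv⟩ := hdeg v
  obtain ⟨α, β, hα, hβ, -⟩ := main e he
  rcases hv with h | h
  · exact ⟨α, h ▸ hα⟩
  · exact ⟨β, h ▸ hβ⟩
end

section
/- Let G = (V, E, Σ, Π) be a constraint graph in which every vertex lies on at least one edge. If ψ : V → Σ is a satisfying assignment for G, then C_ψ = {(v, ψ(v)) : v ∈ V} is a cover of the Lund–Yannakakis system with |C_ψ| = |V|; moreover, every cover C ⊆ V × Σ satisfies |C| ≥ |V|. Consequently, if G is satisfiable, the minimum size of a cover equals |V|. -/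
/-- if every vertex lies on at least one edge and `ψ` is a satisfying
assignment, then `C_ψ = {(v, ψ(v)) : v ∈ V}` is a cover of the Lund–Yannakakis system of
size `|V|`, every cover has size at least `|V|`, and the minimum size of a cover is `|V|`. -/
theorem satisfying_assignment_min_cover {V A : Type*} [Fintype V] [DecidableEq V]
    [DecidableEq A]
    (E : Finset (V × V)) (π : V × V → Set (A × A))
    (hdeg : ∀ v : V, ∃ e ∈ E, e.1 = v ∨ e.2 = v)
    (ψ : V → A) (hψ : ∀ e ∈ E, (ψ e.1, ψ e.2) ∈ π e) :
    IsLYCover E π (Finset.univ.image fun v => (v, ψ v)) ∧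
    (Finset.univ.image fun v => (v, ψ v)).card = Fintype.card V ∧
    (∀ C : Finset (V × A), IsLYCover E π C → Fintype.card V ≤ C.card) ∧
    IsLeast {n : ℕ | ∃ C : Finset (V × A), IsLYCover E π C ∧ C.card = n}
      (Fintype.card V) := by
  have hcover : IsLYCover E π (Finset.univ.image fun v => (v, ψ v)) := by
    intro p hp
    by_cases h : p.2 (ψ p.1.1) = false
    · exact ⟨(p.1.1, ψ p.1.1), Finset.mem_image.2 ⟨p.1.1, Finset.mem_univ _, rfl⟩,
        hp, Or.inl ⟨rfl, h⟩⟩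
    · exact ⟨(p.1.2, ψ p.1.2), Finset.mem_image.2 ⟨p.1.2, Finset.mem_univ _, rfl⟩,
        hp, Or.inr ⟨rfl, ψ p.1.1, hψ p.1 hp, by simpa using h⟩⟩
  have hcard : (Finset.univ.image fun v => (v, ψ v)).card = Fintype.card V := by
    rw [Finset.card_image_of_injective _ (fun a b h => (Prod.mk.injEq _ _ _ _ ▸ h).1)]
    exact Finset.card_univ
  have hlb : ∀ C : Finset (V × A), IsLYCover E π C → Fintype.card V ≤ C.card := by
    intro C hC
    have key : ∀ v : V, ∃ α, (v, α) ∈ C := by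
      intro v
      obtain ⟨e, he, hv⟩ := hdeg v
      rcases hv with hv | hv
      · obtain ⟨va, hva, _, hmem⟩ := hC (e, fun _ => false) he
        rcases hmem with ⟨h1, _⟩ | ⟨_, _, _, h2⟩
        · exact ⟨va.2, by rw [← h1.symm.trans hv]; simpa using hva⟩
        · simp at h2
      · obtain ⟨va, hva, _, hmem⟩ := hC (e, fun _ => true) he
        rcases hmem with ⟨_, h1⟩ | ⟨h2, _⟩
        · simp at h1
        · exact ⟨va.2, by rw [← h2.symm.trans hv]; simpa using hva⟩
    choose f hf using key
    calc Fintype.card V = Finset.univ.card := Finset.card_univ.symm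
      _ ≤ C.card := Finset.card_le_card_of_injOn (fun v => (v, f v))
          (fun v _ => hf v) (fun a _ b _ h => (Prod.mk.injEq _ _ _ _ ▸ h).1)
  exact ⟨hcover, hcard, hlb,
    ⟨_, hcover, hcard⟩, fun n ⟨C, hC, hCn⟩ => hCn ▸ hlb C hC⟩
end

section
/- Let G = (V, E, Σ, Π) be a constraint graph in which every vertex lies on at least one edge, and let ψ^ini and ψ^tar be satisfying assignments for G with val_G(ψ^ini ↭ ψ^tar) = 1. Then in the Lund–Yannakakis system there exists a reconfiguration sequence of covers from C_{ψ^ini} to C_{ψ^tar} in which every cover has size at most |V| + 1. -/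
lemma foldr_min_le {l : List ℝ} (a : ℝ) {x : ℝ} (hx : x ∈ l) : l.foldr min a ≤ x := by
  induction l with
  | nil => simp at hx
  | cons y ys ih =>
    rcases List.mem_cons.mp hx with rfl | h
    · exact min_le_left _ _
    · exact le_trans (min_le_right _ _) (ih h)

lemma foldr_min_mem (l : List ℝ) (a : ℝ) : l.foldr min a = a ∨ l.foldr min a ∈ l := by
  induction l with
  | nil => left; rfl
  | cons y ys ih =>
    rcases min_choice y (ys.foldr min a) with h | h
    · right; rw [List.foldr_cons, h]; exact List.mem_cons_self
    · rcases ih with h' | h'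
      · left; rw [List.foldr_cons, h, h']
      · right; rw [List.foldr_cons, h]; exact List.mem_cons_of_mem _ h'

lemma exists_adj_chain {V A : Type*} [Fintype V] [DecidableEq V] (ψ φ : V → A) :
    ∃ l : List (V → A), l ≠ [] ∧ l.head? = some ψ ∧ l.getLast? = some φ ∧ l.Chain' adjOne := by
  classical
  obtain ⟨n, hn⟩ : ∃ n, (Finset.univ.filter fun v => ψ v ≠ φ v).card = n := ⟨_, rfl⟩
  induction n generalizing ψ with
  | zero =>
    have hψφ : ψ = φ := by
      funext v
      by_contra hv
      have hmem : v ∈ Finset.univ.filter fun v => ψ v ≠ φ v := by simp [hv]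
      rw [Finset.card_eq_zero.mp hn] at hmem
      simp at hmem
    exact ⟨[φ], by simp, by simp [hψφ], by simp, List.isChain_singleton _⟩
  | succ n ih =>
    have hne : (Finset.univ.filter fun v => ψ v ≠ φ v).Nonempty := by
      rw [← Finset.card_pos, hn]; omega
    obtain ⟨v0, hv0⟩ := hne
    have hv0' : ψ v0 ≠ φ v0 := by simpa using (Finset.mem_filter.mp hv0).2
    have hcard : (Finset.univ.filter fun v => Function.update ψ v0 (φ v0) v ≠ φ v).card = n := by
      have heq : (Finset.univ.filter fun v => Function.update ψ v0 (φ v0) v ≠ φ v) =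
          (Finset.univ.filter fun v => ψ v ≠ φ v).erase v0 := by
        ext v
        by_cases hv : v = v0 <;> simp [Function.update_apply, hv]
      rw [heq, Finset.card_erase_of_mem hv0, hn]
      omega
    obtain ⟨l, hl0, hl1, hl2, hl3⟩ := ih _ hcard
    obtain ⟨x, xs, rfl⟩ := List.exists_cons_of_ne_nil hl0
    have hx : x = Function.update ψ v0 (φ v0) := by simpa using hl1
    refine ⟨ψ :: x :: xs, by simp, by simp, by simpa using hl2, ?_⟩
    simp only [List.Chain', List.isChain_cons_cons]
    refine ⟨⟨v0, fun v hv => ?_⟩, hl3⟩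
    rw [hx, Function.update_apply, if_neg hv]

-- main extraction lemma
lemma extract_sat_chain {V A : Type*} [Fintype V] [DecidableEq V] [Fintype A] [DecidableEq A]
    (E : Finset (V × V)) (π : V × V → Set (A × A)) (ψi ψt : V → A)
    (hval : maxValC (fun e : {x // x ∈ E} => fun ψ : V → A =>
      (ψ e.1.1, ψ e.1.2) ∈ π e.1) ψi ψt = 1) :
    ∃ L : List (V → A), L ≠ [] ∧ L.head? = some ψi ∧ L.getLast? = some ψt ∧
      L.Chain' adjOne ∧ ∀ ψ ∈ L, ∀ e ∈ E, (ψ e.1, ψ e.2) ∈ π e := by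
  classical
  by_cases hE : E = ∅
  · obtain ⟨l, h0, h1, h2, h3⟩ := exists_adj_chain ψi ψt
    exact ⟨l, h0, h1, h2, h3, fun ψ _ e he => absurd he (by simp [hE])⟩
  set sat : {x // x ∈ E} → (V → A) → Prop :=
    fun e ψ => (ψ e.1.1, ψ e.1.2) ∈ π e.1 with hsatdef
  set T : Set ℝ := {r : ℝ | ∃ l : List (V → A), l ≠ [] ∧ l.head? = some ψi ∧
    l.getLast? = some ψt ∧ l.Chain' adjOne ∧ r = valSeqC sat l} with hT
  have hcardι : Fintype.card {x // x ∈ E} = E.card := Fintype.card_coe E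
  have hkle : ∀ ψ : V → A, Nat.card {i : {x // x ∈ E} // sat i ψ} ≤ E.card := by
    intro ψ
    rw [Nat.card_eq_fintype_card, ← hcardι]
    exact Fintype.card_subtype_le _
  have hTsub : T ⊆ ((fun k : ℕ => (k : ℝ) / E.card) '' (Set.Iic E.card)) ∪ {1} := by
    rintro r ⟨l, -, -, -, -, rfl⟩
    rcases foldr_min_mem (l.map (valC sat)) 1 with h | h
    · right; exact h
    · left
      obtain ⟨ψ, -, hψ⟩ := List.mem_map.mp h
      exact ⟨Nat.card {i : {x // x ∈ E} // sat i ψ}, hkle ψ, by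
        simp only [valSeqC]; rw [← hψ]; simp [valC, hcardι]⟩
  have hTfin : T.Finite :=
    Set.Finite.subset (Set.Finite.union (Set.Finite.image _ (Set.finite_Iic _))
      (Set.finite_singleton 1)) hTsub
  have hTne : T.Nonempty := by
    obtain ⟨l, h0, h1, h2, h3⟩ := exists_adj_chain ψi ψt
    exact ⟨valSeqC sat l, l, h0, h1, h2, h3, rfl⟩
  have hmem : (1 : ℝ) ∈ T := by
    have := Set.Nonempty.csSup_mem hTne hTfin
    rwa [show sSup T = 1 from hval] at this
  obtain ⟨l, h0, h1, h2, h3, h4⟩ := hmem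
  refine ⟨l, h0, h1, h2, h3, ?_⟩
  intro ψ hψ e he
  have hEpos : 0 < E.card := Finset.card_pos.mpr (Finset.nonempty_iff_ne_empty.mpr hE)
  have hle : (1 : ℝ) ≤ valC sat ψ := by
    rw [h4]
    exact foldr_min_le 1 (List.mem_map.mpr ⟨ψ, hψ, rfl⟩)
  have hk : (E.card : ℝ) ≤ Nat.card {i : {x // x ∈ E} // sat i ψ} := by
    rw [valC, hcardι] at hle
    have := (le_div_iff₀ (by exact_mod_cast hEpos)).mp hle
    linarith
  have hkeq : Nat.card {i : {x // x ∈ E} // sat i ψ} = E.card :=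
    le_antisymm (hkle ψ) (by exact_mod_cast hk)
  have hcard2 : Fintype.card {i : {x // x ∈ E} // sat i ψ} = Fintype.card {x // x ∈ E} := by
    rw [← Nat.card_eq_fintype_card, hkeq, hcardι]
  have hall : ∀ i : {x // x ∈ E}, sat i ψ := by
    rw [Fintype.card_subtype] at hcard2
    have := Finset.eq_univ_of_card _ hcard2
    intro i
    have hi : i ∈ Finset.univ.filter (fun i => sat i ψ) := by rw [this]; exact Finset.mem_univ i
    exact (Finset.mem_filter.mp hi).2
  exact hall ⟨e, he⟩

lemma cover_of_sat {V A : Type*} [Fintype V] [DecidableEq V] [DecidableEq A]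
    (E : Finset (V × V)) (π : V × V → Set (A × A)) (ψ : V → A)
    (hψ : ∀ e ∈ E, (ψ e.1, ψ e.2) ∈ π e) :
    IsLYCover E π (Finset.univ.image fun v => (v, ψ v)) := by
  intro p hp
  by_cases hq : p.2 (ψ p.1.1) = false
  · exact ⟨(p.1.1, ψ p.1.1), Finset.mem_image.mpr ⟨p.1.1, Finset.mem_univ _, rfl⟩,
      hp, Or.inl ⟨rfl, hq⟩⟩
  · refine ⟨(p.1.2, ψ p.1.2), Finset.mem_image.mpr ⟨p.1.2, Finset.mem_univ _, rfl⟩,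
      hp, Or.inr ⟨rfl, ψ p.1.1, hψ p.1 hp, ?_⟩⟩
    simpa using hq

lemma cover_mono {V A : Type*} {E : Finset (V × V)} {π : V × V → Set (A × A)}
    {C C' : Finset (V × A)} (h : C ⊆ C') (hC : IsLYCover E π C) : IsLYCover E π C' := by
  intro p hp
  obtain ⟨va, hva, hmem⟩ := hC p hp
  exact ⟨va, h hva, hmem⟩

lemma adj_sdiff {V A : Type*} [Fintype V] [DecidableEq V] [DecidableEq A] {ψ ψ' : V → A}
    (h : adjOne ψ ψ') :
    ((Finset.univ.image fun v => (v, ψ' v)) \ (Finset.univ.image fun v => (v, ψ v))).card ≤ 1 := by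
  obtain ⟨v0, hv0⟩ := h
  have hsub : (Finset.univ.image fun v => (v, ψ' v)) \ (Finset.univ.image fun v => (v, ψ v)) ⊆
      {(v0, ψ' v0)} := by
    intro x hx
    rw [Finset.mem_sdiff] at hx
    obtain ⟨v, -, rfl⟩ := Finset.mem_image.mp hx.1
    rw [Finset.mem_singleton]
    by_cases hv : v = v0
    · subst hv; rfl
    · exact absurd (Finset.mem_image.mpr ⟨v, Finset.mem_univ v, by rw [hv0 v hv]⟩) hx.2
  simpa using Finset.card_le_card hsub

lemma adjOne_symm {V A : Type*} {ψ ψ' : V → A} (h : adjOne ψ ψ') : adjOne ψ' ψ := by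
  obtain ⟨v0, hv0⟩ := h; exact ⟨v0, fun v hv => (hv0 v hv).symm⟩

lemma build_covers {V A : Type*} [Fintype V] [DecidableEq V] [Fintype A] [DecidableEq A]
    (E : Finset (V × V)) (π : V × V → Set (A × A)) :
    ∀ L : List (V → A), L ≠ [] → L.Chain' adjOne →
    (∀ ψ ∈ L, ∀ e ∈ E, (ψ e.1, ψ e.2) ∈ π e) →
    ∃ l : List (Finset (V × A)), l ≠ [] ∧
      l.head? = L.head?.map (fun ψ => Finset.univ.image fun v => (v, ψ v)) ∧
      l.getLast? = L.getLast?.map (fun ψ => Finset.univ.image fun v => (v, ψ v)) ∧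
      l.Chain' (fun P Q => ((P \ Q) ∪ (Q \ P)).card ≤ 1) ∧
      ∀ C ∈ l, IsLYCover E π C ∧ C.card ≤ Fintype.card V + 1 := by
  intro L
  induction L with
  | nil => intro h; exact absurd rfl h
  | cons ψ L ih =>
    intro _ hchain hsat
    match L, ih with
    | [], _ =>
      refine ⟨[Finset.univ.image fun v => (v, ψ v)], by simp, by simp, by simp, List.isChain_singleton _, ?_⟩
      intro C hC
      rw [List.mem_singleton] at hC
      subst hC
      refine ⟨cover_of_sat E π ψ (hsat ψ (by simp)), ?_⟩
      calc (Finset.univ.image fun v => (v, ψ v)).card ≤ Finset.univ.card :=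
            Finset.card_image_le
        _ ≤ Fintype.card V + 1 := by simp
    | ψ' :: L', ih =>
      have hadj : adjOne ψ ψ' := (List.isChain_cons_cons.mp hchain).1
      obtain ⟨l, hl0, hl1, hl2, hl3, hl4⟩ := ih (by simp) (List.isChain_cons_cons.mp hchain).2
        (fun φ hφ => hsat φ (List.mem_cons_of_mem _ hφ))
      obtain ⟨x, xs, rfl⟩ := List.exists_cons_of_ne_nil hl0
      set Cψ := Finset.univ.image fun v => (v, ψ v) with hCψ
      set Cψ' := Finset.univ.image fun v => (v, ψ' v) with hCψ'
      have hx : x = Cψ' := by simpa using hl1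
      subst hx
      have hCcard : Cψ.card ≤ Fintype.card V := by
        calc Cψ.card ≤ Finset.univ.card := Finset.card_image_le
          _ = Fintype.card V := Finset.card_univ
      have hcov : IsLYCover E π Cψ := cover_of_sat E π ψ (hsat ψ (by simp))
      refine ⟨Cψ :: (Cψ ∪ Cψ') :: Cψ' :: xs, by simp, by simp [hCψ], ?_, ?_, ?_⟩
      · rw [List.getLast?_cons_cons, List.getLast?_cons_cons]
        rw [hl2]
        simp
      · simp only [List.Chain', List.isChain_cons_cons]
        refine ⟨?_, ?_, hl3⟩
        · have h1 : Cψ \ (Cψ ∪ Cψ') = ∅ := by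
            rw [Finset.sdiff_eq_empty_iff_subset]; exact Finset.subset_union_left
          have h2 : (Cψ ∪ Cψ') \ Cψ = Cψ' \ Cψ := Finset.union_sdiff_left ..
          rw [h1, h2, Finset.empty_union]
          exact adj_sdiff hadj
        · have h1 : Cψ' \ (Cψ ∪ Cψ') = ∅ := by
            rw [Finset.sdiff_eq_empty_iff_subset]; exact Finset.subset_union_right
          have h2 : (Cψ ∪ Cψ') \ Cψ' = Cψ \ Cψ' := Finset.union_sdiff_right ..
          rw [h1, h2, Finset.union_empty]
          exact adj_sdiff (adjOne_symm hadj)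
      · intro C hC
        rcases List.mem_cons.mp hC with rfl | hC
        · exact ⟨hcov, le_trans hCcard (Nat.le_succ _)⟩
        rcases List.mem_cons.mp hC with rfl | hC
        · refine ⟨cover_mono Finset.subset_union_left hcov, ?_⟩
          have : Cψ ∪ Cψ' = Cψ ∪ (Cψ' \ Cψ) := by
            rw [Finset.union_sdiff_self_eq_union]
          rw [this]
          calc (Cψ ∪ (Cψ' \ Cψ)).card ≤ Cψ.card + (Cψ' \ Cψ).card := Finset.card_union_le _ _
            _ ≤ Fintype.card V + 1 := Nat.add_le_add hCcard (adj_sdiff hadj)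
        · exact hl4 C hC

/-- if every vertex lies on at least one edge and `ψi, ψt` are satisfying
assignments with `val_G(ψi ↭ ψt) = 1`, then there is a reconfiguration sequence of covers of
the Lund–Yannakakis system from `C_{ψi}` to `C_{ψt}` (consecutive covers differing by adding
or removing a single element) in which every cover has size at most `|V| + 1`. -/
theorem setcover_reconf_completeness {V A : Type*} [Fintype V] [DecidableEq V]
    [Fintype A] [DecidableEq A]
    (E : Finset (V × V)) (π : V × V → Set (A × A))
    (hdeg : ∀ v : V, ∃ e ∈ E, e.1 = v ∨ e.2 = v)
    (ψi ψt : V → A)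
    (hψi : ∀ e ∈ E, (ψi e.1, ψi e.2) ∈ π e) (hψt : ∀ e ∈ E, (ψt e.1, ψt e.2) ∈ π e)
    (hval : maxValC (fun e : {x // x ∈ E} => fun ψ : V → A =>
      (ψ e.1.1, ψ e.1.2) ∈ π e.1) ψi ψt = 1) :
    ∃ l : List (Finset (V × A)), l ≠ [] ∧
      l.head? = some (Finset.univ.image fun v => (v, ψi v)) ∧
      l.getLast? = some (Finset.univ.image fun v => (v, ψt v)) ∧
      l.Chain' (fun P Q => ((P \ Q) ∪ (Q \ P)).card ≤ 1) ∧
      ∀ C ∈ l, IsLYCover E π C ∧ C.card ≤ Fintype.card V + 1 := by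
  classical
  obtain ⟨L, hL0, hL1, hL2, hL3, hL4⟩ := extract_sat_chain E π ψi ψt hval
  obtain ⟨l, h0, h1, h2, h3, h4⟩ := build_covers E π L hL0 hL3 hL4
  refine ⟨l, h0, ?_, ?_, h3, h4⟩
  · rw [h1, hL1]; rfl
  · rw [h2, hL2]; rfl
end

section
/- Let ε ∈ (0,1), let d ≥ 1 be an integer and λ > 0 a real with λ/d ≤ ε/3, and let G = (V, E, Σ, Π) be a constraint graph whose underlying graph is d-regular and with |V| ≥ d²/λ². For every cover C ⊆ V × Σ of the Lund–Yannakakis system with |C| ≤ (2 − ε)(|V| + 1), the set S = {v ∈ V : |L_v(C)| = 1} satisfies |S| ≥ (1 − λ/d)·ε·|V|. -/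
/-- let `ε ∈ (0,1)`, `d ≥ 1`, `λ > 0` with `λ/d ≤ ε/3`, and let the underlying
graph be `d`-regular with `|V| ≥ d²/λ²`.  For every cover `C` of the Lund–Yannakakis system
with `|C| ≤ (2 − ε)(|V| + 1)`, the set `S = {v : |L_v(C)| = 1}` satisfies
`|S| ≥ (1 − λ/d)·ε·|V|`. -/
theorem singleton_vertices_lower_bound {V A : Type*} [Fintype V] [DecidableEq V]
    [Fintype A] [DecidableEq A]
    (E : Finset (V × V)) (π : V × V → Set (A × A))
    (ε : ℝ) (hε0 : 0 < ε) (hε1 : ε < 1)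
    (d : ℕ) (hd : 1 ≤ d) (lam : ℝ) (hlam0 : 0 < lam) (hlam : lam / (d : ℝ) ≤ ε / 3)
    (hreg : ∀ v : V, (E.filter fun e => e.1 = v ∨ e.2 = v).card = d)
    (hV : ((d : ℝ) ^ 2) / lam ^ 2 ≤ (Fintype.card V : ℝ))
    (C : Finset (V × A)) (hC : IsLYCover E π C)
    (hCcard : (C.card : ℝ) ≤ (2 - ε) * ((Fintype.card V : ℝ) + 1)) :
    (1 - lam / (d : ℝ)) * ε * (Fintype.card V : ℝ)
      ≤ ((Finset.univ.filter fun v : V =>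
            (Finset.univ.filter fun a : A => (v, a) ∈ C).card = 1).card : ℝ) := by
  classical
  set n := Fintype.card V with hn
  set Lcard : V → ℕ := fun v => (Finset.univ.filter fun a : A => (v, a) ∈ C).card with hLdef
  -- every vertex has a nonempty label set
  have hpos : ∀ v : V, 1 ≤ Lcard v := by
    intro v
    have hne : (E.filter fun e => e.1 = v ∨ e.2 = v).Nonempty := by
      rw [← Finset.card_pos, hreg v]; exact hd
    obtain ⟨e, he⟩ := hne
    rw [Finset.mem_filter] at he
    obtain ⟨heE, hv⟩ := he
    rcases hv with h1 | h2
    · obtain ⟨⟨u, α⟩, huC, hmem⟩ := hC (e, fun _ => false) heE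
      simp only [LYSet, Set.mem_setOf_eq] at hmem
      rcases hmem.2 with ⟨hu, _⟩ | ⟨_, _, _, hfalse⟩
      · have huv : u = v := (h1 ▸ hu : e.1 = u).symm.trans h1
        have : (v, α) ∈ C := huv ▸ huC
        refine Finset.card_pos.mpr ⟨α, ?_⟩
        simp [this]
      · simp at hfalse
    · obtain ⟨⟨u, α⟩, huC, hmem⟩ := hC (e, fun _ => true) heE
      simp only [LYSet, Set.mem_setOf_eq] at hmem
      rcases hmem.2 with ⟨_, hfalse⟩ | ⟨hu, _⟩
      · simp at hfalse
      · have huv : u = v := hu.symm.trans h2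
        have : (v, α) ∈ C := huv ▸ huC
        refine Finset.card_pos.mpr ⟨α, ?_⟩
        simp [this]
  -- |C| = ∑ v, Lcard v
  have hsum : C.card = ∑ v : V, Lcard v := by
    rw [Finset.card_eq_sum_card_fiberwise (f := Prod.fst) (t := Finset.univ)
      (fun x _ => Finset.mem_univ _)]
    refine Finset.sum_congr rfl fun v _ => ?_
    refine Finset.card_bij' (fun p _ => p.2) (fun a _ => (v, a)) ?_ ?_ ?_ ?_
    · intro p hp
      simp only [Finset.mem_filter] at hp ⊢
      have : p = (v, p.2) := by
        rw [← hp.2]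
      refine ⟨Finset.mem_univ _, ?_⟩
      rw [← this]; exact hp.1
    · intro a ha
      simp only [Finset.mem_filter, Finset.mem_univ, true_and] at ha ⊢
      exact ⟨ha, trivial⟩
    · intro p hp
      obtain ⟨hpC, hpv⟩ := Finset.mem_filter.mp hp
      obtain ⟨a, b⟩ := p
      simp only at hpv
      subst hpv
      rfl
    · intro a _
      rfl
  set S : Finset V := Finset.univ.filter fun v : V => Lcard v = 1 with hSdef
  set T : Finset V := Finset.univ.filter fun v : V => ¬ Lcard v = 1 with hTdef
  have hST : S.card + T.card = n := by
    rw [hSdef, hTdef]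
    rw [Finset.card_filter_add_card_filter_not]
    exact Finset.card_univ
  -- lower bound for the sum
  have hlow : (S.card : ℝ) + 2 * (T.card : ℝ) ≤ ∑ v : V, (Lcard v : ℝ) := by
    have hle : ∀ v ∈ Finset.univ, (if Lcard v = 1 then (1 : ℝ) else 2) ≤ (Lcard v : ℝ) := by
      intro v _
      by_cases h : Lcard v = 1
      · simp [h]
      · simp only [h, if_false]
        have h2 : 2 ≤ Lcard v := by
          have := hpos v
          omega
        exact_mod_cast h2
    calc (S.card : ℝ) + 2 * (T.card : ℝ)
        = ∑ v : V, (if Lcard v = 1 then (1 : ℝ) else 2) := by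
          rw [Finset.sum_ite, Finset.sum_const, Finset.sum_const]
          simp [hSdef, hTdef, mul_comm]
      _ ≤ ∑ v : V, (Lcard v : ℝ) := Finset.sum_le_sum hle
  have hsumR : (∑ v : V, (Lcard v : ℝ)) = (C.card : ℝ) := by
    rw [hsum]; push_cast; ring
  -- so S.card ≥ 2n - |C|
  have hkey : 2 * (n : ℝ) - (C.card : ℝ) ≤ (S.card : ℝ) := by
    have hcast : (S.card : ℝ) + (T.card : ℝ) = (n : ℝ) := by exact_mod_cast hST
    have := hlow
    rw [hsumR] at this
    linarith
  -- arithmetic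
  have hd1 : (1 : ℝ) ≤ (d : ℝ) := by exact_mod_cast hd
  have hdpos : (0 : ℝ) < (d : ℝ) := by linarith
  have h1 : 3 * lam ≤ ε * d := by
    have := (div_le_div_iff₀ hdpos (by norm_num : (0:ℝ) < 3)).mp hlam
    linarith
  have h2 : (d : ℝ) / lam ≤ lam / d * (n : ℝ) := by
    have h3 : (d : ℝ) ^ 2 / lam ^ 2 ≤ (n : ℝ) := hV
    have h3' : (d : ℝ) ^ 2 ≤ (n : ℝ) * lam ^ 2 := by
      rw [div_le_iff₀ (by positivity : (0:ℝ) < lam ^ 2)] at h3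
      linarith
    rw [div_le_iff₀ hlam0, div_mul_eq_mul_div, div_mul_eq_mul_div, le_div_iff₀ hdpos]
    nlinarith
  have h4 : (3 : ℝ) ≤ ε * (lam / d * (n : ℝ)) := by
    have h5 : (3 : ℝ) / ε ≤ (d : ℝ) / lam := by
      rw [div_le_div_iff₀ hε0 hlam0]
      linarith
    have h6 : (3 : ℝ) / ε ≤ lam / d * n := le_trans h5 h2
    rw [div_le_iff₀ hε0] at h6
    linarith [mul_comm ε (lam / d * (n : ℝ))]
  have hfinal : (1 - lam / d) * ε * (n : ℝ) ≤ 2 * (n : ℝ) - (C.card : ℝ) := by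
    nlinarith [h4]
  calc (1 - lam / (d : ℝ)) * ε * (n : ℝ) ≤ 2 * (n : ℝ) - (C.card : ℝ) := hfinal
    _ ≤ (S.card : ℝ) := hkey
end

section
/- Let ε ∈ (0,1), and let G = (V, E, Σ, Π) be a constraint graph whose underlying graph is d-regular with adjacency matrix A satisfying λ(A) ≤ λ, where λ > 0, λ/d ≤ ε/3, and |V| ≥ d²/λ². Let ψ^ini and ψ^tar be satisfying assignments for G and set ε' = ε² · (d/(d + λ)) · (1 − 3λ/(εd)). If val_G(ψ^ini ↭ ψ^tar) < ε', then every reconfiguration sequence of covers from C_{ψ^ini} to C_{ψ^tar} in the Lund–Yannakakis system contains a cover C with |C| > (2 − ε)(|V| + 1). -/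
section Spec
variable {V : Type*} [Fintype V] (M : Matrix V V ℝ)

lemma sum_sq_pos_of_ne_zero {x : V → ℝ} (hx : x ≠ 0) : 0 < ∑ v, (x v)^2 := by
  obtain ⟨v, hv⟩ := Function.ne_iff.1 hx
  have hv' : x v ≠ 0 := by simpa using hv
  have h1 : (0:ℝ) < (x v)^2 := by positivity
  calc (0:ℝ) < (x v)^2 := h1
    _ ≤ ∑ v, (x v)^2 :=
        Finset.single_le_sum (f := fun i => (x i)^2) (fun i _ => by positivity)
          (Finset.mem_univ v)

lemma mulVec_sq_le (x : V → ℝ) :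
    ∑ v, (M.mulVec x v)^2 ≤ (∑ v, ∑ w, (M v w)^2) * ∑ v, (x v)^2 := by
  have h : ∀ v, (M.mulVec x v)^2 ≤ (∑ w, (M v w)^2) * ∑ w, (x w)^2 := by
    intro v
    have := Finset.sum_mul_sq_le_sq_mul_sq Finset.univ (fun w => M v w) x
    simpa [Matrix.mulVec, dotProduct] using this
  calc ∑ v, (M.mulVec x v)^2 ≤ ∑ v, (∑ w, (M v w)^2) * ∑ w, (x w)^2 :=
        Finset.sum_le_sum (fun v _ => h v)
    _ = (∑ v, ∑ w, (M v w)^2) * ∑ v, (x v)^2 := by rw [← Finset.sum_mul]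

lemma matLambda_bddAbove : BddAbove {r : ℝ | ∃ x : V → ℝ, x ≠ 0 ∧ (∑ v, x v) = 0 ∧
    r = Real.sqrt (∑ v, (M.mulVec x v) ^ 2) / Real.sqrt (∑ v, (x v) ^ 2)} := by
  refine ⟨Real.sqrt (∑ v, ∑ w, (M v w)^2), ?_⟩
  rintro r ⟨x, hx, -, rfl⟩
  have hx2 : 0 < ∑ v, (x v)^2 := sum_sq_pos_of_ne_zero hx
  rw [div_le_iff₀ (Real.sqrt_pos.2 hx2)]
  rw [← Real.sqrt_mul (by positivity)]
  exact Real.sqrt_le_sqrt (mulVec_sq_le M x)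

lemma mulVec_norm_le {lam : ℝ} (hlam0 : 0 ≤ lam) (hA : matLambda M ≤ lam)
    (x : V → ℝ) (hx0 : (∑ v, x v) = 0) :
    Real.sqrt (∑ v, (M.mulVec x v)^2) ≤ lam * Real.sqrt (∑ v, (x v)^2) := by
  by_cases hx : x = 0
  · subst hx
    have h0 : ∑ v, (M.mulVec (0 : V → ℝ) v)^2 = 0 := by simp
    rw [h0, Real.sqrt_zero]
    positivity
  · have hx2 : 0 < ∑ v, (x v)^2 := sum_sq_pos_of_ne_zero hx
    have hmem : Real.sqrt (∑ v, (M.mulVec x v) ^ 2) / Real.sqrt (∑ v, (x v) ^ 2) ∈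
        {r : ℝ | ∃ x : V → ℝ, x ≠ 0 ∧ (∑ v, x v) = 0 ∧
          r = Real.sqrt (∑ v, (M.mulVec x v) ^ 2) / Real.sqrt (∑ v, (x v) ^ 2)} :=
      ⟨x, hx, hx0, rfl⟩
    have := (le_csSup (matLambda_bddAbove M) hmem).trans hA
    calc Real.sqrt (∑ v, (M.mulVec x v)^2)
        = (Real.sqrt (∑ v, (M.mulVec x v) ^ 2) / Real.sqrt (∑ v, (x v) ^ 2)) *
            Real.sqrt (∑ v, (x v)^2) := by
          rw [div_mul_cancel₀]
          exact (Real.sqrt_pos.2 hx2).ne'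
      _ ≤ lam * Real.sqrt (∑ v, (x v)^2) := by
          apply mul_le_mul_of_nonneg_right this (Real.sqrt_nonneg _)

lemma mulVec_sq_le_lam {lam : ℝ} (hlam0 : 0 ≤ lam) (hA : matLambda M ≤ lam)
    (x : V → ℝ) (hx0 : (∑ v, x v) = 0) :
    ∑ v, (M.mulVec x v)^2 ≤ lam^2 * ∑ v, (x v)^2 := by
  have h := mulVec_norm_le M hlam0 hA x hx0
  have h1 : (0:ℝ) ≤ ∑ v, (M.mulVec x v)^2 := by positivity
  have h2 : (0:ℝ) ≤ ∑ v, (x v)^2 := by positivity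
  have := mul_self_le_mul_self (Real.sqrt_nonneg _) h
  rw [Real.mul_self_sqrt h1] at this
  calc ∑ v, (M.mulVec x v)^2 ≤ (lam * Real.sqrt (∑ v, (x v)^2)) * (lam * Real.sqrt (∑ v, (x v)^2)) := this
    _ = lam^2 * (Real.sqrt (∑ v, (x v)^2) * Real.sqrt (∑ v, (x v)^2)) := by ring
    _ = lam^2 * ∑ v, (x v)^2 := by rw [Real.mul_self_sqrt h2]

lemma quad_lower {lam : ℝ} (hlam0 : 0 ≤ lam) (hA : matLambda M ≤ lam)
    (x : V → ℝ) (hx0 : (∑ v, x v) = 0) :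
    -(lam * ∑ v, (x v)^2) ≤ ∑ v, x v * M.mulVec x v := by
  have hcs := Finset.sum_mul_sq_le_sq_mul_sq Finset.univ x (fun v => M.mulVec x v)
  have h2 : (∑ v, x v * M.mulVec x v)^2 ≤ (lam * ∑ v, (x v)^2)^2 := by
    have := mulVec_sq_le_lam M hlam0 hA x hx0
    have hx2 : (0:ℝ) ≤ ∑ v, (x v)^2 := by positivity
    calc (∑ v, x v * M.mulVec x v)^2 ≤ (∑ v, (x v)^2) * ∑ v, (M.mulVec x v)^2 := hcs
      _ ≤ (∑ v, (x v)^2) * (lam^2 * ∑ v, (x v)^2) := by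
          exact mul_le_mul_of_nonneg_left this hx2
      _ = (lam * ∑ v, (x v)^2)^2 := by ring
  have hb : (0:ℝ) ≤ lam * ∑ v, (x v)^2 := by positivity
  nlinarith [h2, hb, sq_nonneg ((∑ v, x v * M.mulVec x v) + lam * ∑ v, (x v)^2)]

end Spec

section Graph
variable {V : Type*} [Fintype V] [DecidableEq V] (E : Finset (V × V))

/-- adjacency entry as ℕ -/
def adjN (v w : V) : ℕ := (E.filter fun e => e = (v, w) ∨ e = (w, v)).card

lemma adjN_symm (v w : V) : adjN E v w = adjN E w v := by
  unfold adjN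
  congr 1
  apply Finset.filter_congr
  intro e _
  simp [or_comm]

lemma adjN_rowsum (d : ℕ) (hreg : ∀ v : V, (E.filter fun e => e.1 = v ∨ e.2 = v).card = d)
    (v : V) : ∑ w, adjN E v w = d := by
  rw [← hreg v]
  unfold adjN
  rw [Finset.card_filter]
  simp_rw [Finset.card_filter]
  rw [Finset.sum_comm]
  apply Finset.sum_congr rfl
  intro e _
  obtain ⟨a, b⟩ := e
  by_cases ha : a = v
  · subst ha
    have : ∀ w : V, ((a, b) = (a, w) ∨ (a, b) = (w, a)) ↔ w = b ∨ (b = a ∧ w = a) := by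
      intro w
      constructor
      · rintro (h | h) <;> simp_all [Prod.ext_iff] <;> tauto
      · rintro (rfl | ⟨rfl, rfl⟩) <;> simp [Prod.ext_iff]
    calc (∑ w, if (a, b) = (a, w) ∨ (a, b) = (w, a) then 1 else 0)
        = ∑ w, if w = b ∨ (b = a ∧ w = a) then 1 else 0 := by
          apply Finset.sum_congr rfl; intro w _; rw [if_congr (this w) rfl rfl]
      _ = 1 := by
          by_cases hb : b = a
          · subst hb
            rw [Finset.sum_eq_single b]
            · simp
            · intro w _ hw; simp [hw]
            · simp
          · rw [Finset.sum_eq_single b]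
            · simp
            · intro w _ hw
              have : ¬(w = b ∨ (b = a ∧ w = a)) := by tauto
              simp [this]
            · simp
      _ = if ((a, b).1 = a ∨ (a, b).2 = a) then 1 else 0 := by simp
  · by_cases hb : b = v
    · subst hb
      have : ∀ w : V, ((a, b) = (b, w) ∨ (a, b) = (w, b)) ↔ w = a := by
        intro w
        constructor
        · rintro (h | h) <;> simp_all [Prod.ext_iff]
        · rintro rfl; right; rfl
      calc (∑ w, if (a, b) = (b, w) ∨ (a, b) = (w, b) then 1 else 0)
          = ∑ w, if w = a then 1 else 0 := by
            apply Finset.sum_congr rfl; intro w _; rw [if_congr (this w) rfl rfl]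
        _ = 1 := by simp
        _ = if ((a, b).1 = b ∨ (a, b).2 = b) then 1 else 0 := by simp
    · have : ∀ w : V, ¬((a, b) = (v, w) ∨ (a, b) = (w, v)) := by
        intro w
        rintro (h | h) <;> simp_all [Prod.ext_iff]
      simp only [this, if_false, Finset.sum_const_zero]
      simp [ha, hb]

end Graph

section Graph2
variable {V : Type*} [Fintype V] [DecidableEq V] (E : Finset (V × V))

lemma adjN_colsum (d : ℕ) (hreg : ∀ v : V, (E.filter fun e => e.1 = v ∨ e.2 = v).card = d)
    (w : V) : ∑ v, adjN E v w = d := by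
  calc ∑ v, adjN E v w = ∑ v, adjN E w v := by
        apply Finset.sum_congr rfl; intro v _; exact adjN_symm E v w
    _ = d := adjN_rowsum E d hreg w

lemma indic_sum (S : Finset V) (h : V → ℝ) :
    ∑ v, (if v ∈ S then (1:ℝ) else 0) * h v = ∑ v ∈ S, h v := by
  simp_rw [ite_mul, one_mul, zero_mul]
  rw [Finset.sum_ite_mem]
  simp

lemma indic_sum' (S : Finset V) :
    ∑ v, (if v ∈ S then (1:ℝ) else 0) = (S.card : ℝ) := by
  simp

lemma Q_le_two_inside (S : Finset V) :
    ∑ v ∈ S, ∑ w ∈ S, adjN E v w ≤ 2 * (E.filter fun e => e.1 ∈ S ∧ e.2 ∈ S).card := by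
  classical
  have key : ∀ e ∈ E, ((S ×ˢ S).filter (fun q => e = (q.1, q.2) ∨ e = (q.2, q.1))).card
      ≤ if e.1 ∈ S ∧ e.2 ∈ S then 2 else 0 := by
    intro e _
    obtain ⟨a, b⟩ := e
    by_cases hab : a ∈ S ∧ b ∈ S
    · rw [if_pos hab]
      have hsub : ((S ×ˢ S).filter (fun q => (a,b) = (q.1, q.2) ∨ (a,b) = (q.2, q.1)))
          ⊆ {(a, b), (b, a)} := by
        intro q hq
        rcases (Finset.mem_filter.1 hq).2 with h | h
        · have h1 : q = (a, b) := by
            obtain ⟨q1, q2⟩ := q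
            simp only [Prod.mk.injEq] at h
            simp [h.1, h.2]
          simp [h1]
        · have h1 : q = (b, a) := by
            obtain ⟨q1, q2⟩ := q
            simp only [Prod.mk.injEq] at h
            simp [h.1, h.2]
          simp [h1]
      calc ((S ×ˢ S).filter (fun q => (a,b) = (q.1, q.2) ∨ (a,b) = (q.2, q.1))).card
          ≤ ({(a, b), (b, a)} : Finset (V × V)).card := Finset.card_le_card hsub
        _ ≤ 2 := (Finset.card_insert_le _ _).trans (by simp)
    · rw [if_neg hab, Nat.le_zero, Finset.card_eq_zero, Finset.filter_eq_empty_iff]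
      intro q hq
      rw [Finset.mem_product] at hq
      rintro (h | h)
      · obtain ⟨q1, q2⟩ := q
        simp only [Prod.mk.injEq] at h
        exact hab ⟨h.1 ▸ hq.1, h.2 ▸ hq.2⟩
      · obtain ⟨q1, q2⟩ := q
        simp only [Prod.mk.injEq] at h
        exact hab ⟨h.1 ▸ hq.2, h.2 ▸ hq.1⟩
  calc ∑ v ∈ S, ∑ w ∈ S, adjN E v w
      = ∑ q ∈ S ×ˢ S, adjN E q.1 q.2 := by rw [Finset.sum_product]
    _ = ∑ q ∈ S ×ˢ S, ∑ e ∈ E, if e = (q.1,q.2) ∨ e = (q.2,q.1) then 1 else 0 := by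
        unfold adjN; simp_rw [Finset.card_filter]
    _ = ∑ e ∈ E, ∑ q ∈ S ×ˢ S, if e = (q.1,q.2) ∨ e = (q.2,q.1) then 1 else 0 :=
        Finset.sum_comm
    _ = ∑ e ∈ E, ((S ×ˢ S).filter fun q => e = (q.1,q.2) ∨ e = (q.2,q.1)).card := by
        simp_rw [Finset.card_filter]
    _ ≤ ∑ e ∈ E, if e.1 ∈ S ∧ e.2 ∈ S then 2 else 0 := Finset.sum_le_sum key
    _ = 2 * (E.filter fun e => e.1 ∈ S ∧ e.2 ∈ S).card := by
        rw [Finset.card_filter, Finset.mul_sum]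
        apply Finset.sum_congr rfl
        intro e _
        split <;> simp

lemma two_Ecard_le (d : ℕ) (hreg : ∀ v : V, (E.filter fun e => e.1 = v ∨ e.2 = v).card = d) :
    2 * E.card ≤ d * Fintype.card V + Fintype.card V := by
  classical
  have hdn : d * Fintype.card V = ∑ e ∈ E, (Finset.univ.filter fun v => e.1 = v ∨ e.2 = v).card := by
    have h1 : d * Fintype.card V = ∑ v : V, (E.filter fun e => e.1 = v ∨ e.2 = v).card := by
      simp [hreg, Finset.sum_const, mul_comm]
    rw [h1]
    simp_rw [Finset.card_filter]
    rw [Finset.sum_comm]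
  have hcnt : ∀ e : V × V, (Finset.univ.filter fun v => e.1 = v ∨ e.2 = v).card
      = if e.1 = e.2 then 1 else 2 := by
    intro e
    obtain ⟨a, b⟩ := e
    have hset : (Finset.univ.filter fun v => (a,b).1 = v ∨ (a,b).2 = v) = {a, b} := by
      ext v
      simp [eq_comm, or_comm]
    rw [hset]
    by_cases hab : a = b
    · subst hab; simp
    · rw [Finset.card_pair hab, if_neg hab]
  have hloops : (E.filter fun e => e.1 = e.2).card ≤ Fintype.card V := by
    have : (E.filter fun e => e.1 = e.2).card ≤ (Finset.univ : Finset V).card := by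
      apply Finset.card_le_card_of_injOn (fun e => e.1) (fun _ _ => Finset.mem_univ _)
      intro e he e' he' hee
      have h1 := (Finset.mem_filter.1 he).2
      have h2 := (Finset.mem_filter.1 he').2
      obtain ⟨a, b⟩ := e; obtain ⟨a', b'⟩ := e'
      simp only at h1 h2
      simp only [Prod.mk.injEq]
      refine ⟨hee, ?_⟩
      rw [← h1, ← h2]
      exact hee
    simpa using this
  have key : 2 * E.card ≤ d * Fintype.card V + (E.filter fun e => e.1 = e.2).card := by
    rw [hdn, Finset.card_filter]
    have : 2 * E.card = ∑ _e ∈ E, 2 := by simp [mul_comm]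
    rw [this, ← Finset.sum_add_distrib]
    apply Finset.sum_le_sum
    intro e _
    rw [hcnt e]
    by_cases h : e.1 = e.2 <;> simp [h]
  omega

lemma Ecard_le (d : ℕ) (hreg : ∀ v : V, (E.filter fun e => e.1 = v ∨ e.2 = v).card = d) :
    (E.card : ℝ) * 2 ≤ ((d : ℝ) + 1) * Fintype.card V := by
  have := two_Ecard_le E d hreg
  have h2 : ((2 * E.card : ℕ) : ℝ) ≤ ((d * Fintype.card V + Fintype.card V : ℕ) : ℝ) := by
    exact_mod_cast this
  push_cast at h2
  linarith

end Graph2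

section Mix
variable {V : Type*} [Fintype V] [DecidableEq V] (E : Finset (V × V))

/-- the real adjacency matrix -/
noncomputable def adjR : Matrix V V ℝ :=
  Matrix.of fun v w : V => ((E.filter fun e => e = (v, w) ∨ e = (w, v)).card : ℝ)

lemma adjR_eq (v w : V) : adjR E v w = (adjN E v w : ℝ) := rfl

lemma adjR_rowsum (d : ℕ) (hreg : ∀ v : V, (E.filter fun e => e.1 = v ∨ e.2 = v).card = d)
    (v : V) : ∑ w, adjR E v w = (d : ℝ) := by
  simp_rw [adjR_eq]
  rw [← Nat.cast_sum]
  exact Nat.cast_inj.mpr (adjN_rowsum E d hreg v)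

lemma adjR_colsum (d : ℕ) (hreg : ∀ v : V, (E.filter fun e => e.1 = v ∨ e.2 = v).card = d)
    (w : V) : ∑ v, adjR E v w = (d : ℝ) := by
  simp_rw [adjR_eq]
  rw [← Nat.cast_sum]
  exact Nat.cast_inj.mpr (adjN_colsum E d hreg w)

lemma sum_indicator (S : Finset V) (g : V → ℝ) :
    ∑ v, (if v ∈ S then g v else 0) = ∑ v ∈ S, g v := by
  rw [Finset.sum_ite_mem]
  simp

lemma mixing (d : ℕ) (hreg : ∀ v : V, (E.filter fun e => e.1 = v ∨ e.2 = v).card = d)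
    (lam : ℝ) (hlam0 : 0 < lam) (hA : matLambda (adjR E) ≤ lam)
    (hn : 0 < Fintype.card V) (S : Finset V) :
    (d : ℝ) * (S.card : ℝ)^2 / (Fintype.card V : ℝ) - lam * S.card
      ≤ ∑ v ∈ S, ∑ w ∈ S, adjR E v w := by
  classical
  have hnpos : (0:ℝ) < (Fintype.card V : ℝ) := by exact_mod_cast hn
  set n : ℝ := (Fintype.card V : ℝ) with hn'
  set s : ℝ := (S.card : ℝ) with hs'
  set c : ℝ := s / n with hc
  set x : V → ℝ := fun v => (if v ∈ S then (1:ℝ) else 0) - c with hx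
  have hone_sum : ∑ v, (if v ∈ S then (1:ℝ) else 0) = s := by simp [hs']
  have huniv : ∑ v : V, (1:ℝ) = n := by
    rw [Finset.sum_const, Finset.card_univ, nsmul_eq_mul, mul_one]
  have hsum0 : ∑ v, x v = 0 := by
    simp only [hx, Finset.sum_sub_distrib, hone_sum, Finset.sum_const, Finset.card_univ,
      nsmul_eq_mul]
    rw [hc]
    field_simp
    rw [hn']; ring
  have hmv : ∀ v, (adjR E).mulVec x v = ∑ w, adjR E v w * x w := by
    intro v; simp [Matrix.mulVec, dotProduct]
  have e1 : (∑ v, ∑ w, adjR E v w * ((if v ∈ S then (1:ℝ) else 0)) * ((if w ∈ S then (1:ℝ) else 0)))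
      = ∑ v ∈ S, ∑ w ∈ S, adjR E v w := by
    calc (∑ v, ∑ w, adjR E v w * ((if v ∈ S then (1:ℝ) else 0)) * ((if w ∈ S then (1:ℝ) else 0)))
        = ∑ v, (if v ∈ S then (∑ w, (if w ∈ S then adjR E v w else 0)) else 0) := by
          apply Finset.sum_congr rfl; intro v _
          by_cases hv : v ∈ S
          · simp only [hv, if_true, mul_one]
            apply Finset.sum_congr rfl; intro w _
            by_cases hw : w ∈ S <;> simp [hw]
          · simp only [hv, if_false, mul_zero, zero_mul]
            simp
      _ = ∑ v ∈ S, ∑ w, (if w ∈ S then adjR E v w else 0) := sum_indicator S _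
      _ = ∑ v ∈ S, ∑ w ∈ S, adjR E v w := by
          apply Finset.sum_congr rfl; intro v _; exact sum_indicator S _
  have e2 : (∑ v, ∑ w, adjR E v w * ((if v ∈ S then (1:ℝ) else 0))) = (d:ℝ) * s := by
    have h : ∀ v, ∑ w, adjR E v w * ((if v ∈ S then (1:ℝ) else 0))
        = (d:ℝ) * (if v ∈ S then (1:ℝ) else 0) := by
      intro v
      rw [← Finset.sum_mul, adjR_rowsum E d hreg v]
    simp_rw [h]
    rw [← Finset.mul_sum, hone_sum]
  have e3 : (∑ v, ∑ w, adjR E v w * ((if w ∈ S then (1:ℝ) else 0))) = (d:ℝ) * s := by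
    rw [Finset.sum_comm]
    have h : ∀ w, ∑ v, adjR E v w * ((if w ∈ S then (1:ℝ) else 0))
        = (d:ℝ) * (if w ∈ S then (1:ℝ) else 0) := by
      intro w
      rw [← Finset.sum_mul, adjR_colsum E d hreg w]
    simp_rw [h]
    rw [← Finset.mul_sum, hone_sum]
  have e4 : (∑ v, ∑ w : V, adjR E v w) = (d:ℝ) * n := by
    have h : ∀ v, ∑ w, adjR E v w = (d:ℝ) := adjR_rowsum E d hreg
    simp_rw [h]
    rw [Finset.sum_const, Finset.card_univ, nsmul_eq_mul]
    ring
  have hT : ∑ v, x v * (adjR E).mulVec x v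
      = (∑ v ∈ S, ∑ w ∈ S, adjR E v w) - 2 * c * ((d:ℝ) * s) + c^2 * ((d:ℝ) * n) := by
    calc ∑ v, x v * (adjR E).mulVec x v
        = ∑ v, ∑ w, x v * (adjR E v w * x w) := by
          apply Finset.sum_congr rfl; intro v _
          rw [hmv v, Finset.mul_sum]
      _ = ∑ v, ∑ w, (adjR E v w * ((if v ∈ S then (1:ℝ) else 0)) * ((if w ∈ S then (1:ℝ) else 0))
            - c * (adjR E v w * ((if v ∈ S then (1:ℝ) else 0)))
            - c * (adjR E v w * ((if w ∈ S then (1:ℝ) else 0)))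
            + c^2 * adjR E v w) := by
          apply Finset.sum_congr rfl; intro v _
          apply Finset.sum_congr rfl; intro w _
          simp only [hx]
          ring
      _ = (∑ v, ∑ w, adjR E v w * ((if v ∈ S then (1:ℝ) else 0)) * ((if w ∈ S then (1:ℝ) else 0)))
            - c * (∑ v, ∑ w, adjR E v w * ((if v ∈ S then (1:ℝ) else 0)))
            - c * (∑ v, ∑ w, adjR E v w * ((if w ∈ S then (1:ℝ) else 0)))
            + c^2 * (∑ v, ∑ w, adjR E v w) := by
          simp only [Finset.sum_add_distrib, Finset.sum_sub_distrib, Finset.mul_sum]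
      _ = (∑ v ∈ S, ∑ w ∈ S, adjR E v w) - 2 * c * ((d:ℝ) * s) + c^2 * ((d:ℝ) * n) := by
          rw [e1, e2, e3, e4]
          ring
  have hx2 : ∑ v, (x v)^2 = s - 2 * c * s + n * c^2 := by
    have expand : ∀ v, (x v)^2
        = (if v ∈ S then (1:ℝ) else 0) - 2 * c * (if v ∈ S then (1:ℝ) else 0) + c^2 := by
      intro v
      simp only [hx]
      by_cases h : v ∈ S <;> simp [h] <;> ring
    simp_rw [expand]
    simp only [Finset.sum_add_distrib, Finset.sum_sub_distrib, ← Finset.mul_sum]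
    rw [hone_sum, Finset.sum_const, Finset.card_univ, nsmul_eq_mul]
  have hquad := quad_lower (adjR E) hlam0.le hA x hsum0
  have hx2' : ∑ v, (x v)^2 ≤ s := by
    rw [hx2, hc]
    have hs0 : (0:ℝ) ≤ s := by rw [hs']; positivity
    have key : 2 * (s/n) * s - n * (s/n)^2 = s^2 / n := by field_simp; ring
    nlinarith [key, div_nonneg (sq_nonneg s) hnpos.le]
  have hs0 : (0:ℝ) ≤ s := by rw [hs']; positivity
  have h1 : -(lam * s) ≤ ∑ v, x v * (adjR E).mulVec x v := by
    calc -(lam * s) ≤ -(lam * ∑ v, (x v)^2) := by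
          apply neg_le_neg
          exact mul_le_mul_of_nonneg_left hx2' hlam0.le
      _ ≤ ∑ v, x v * (adjR E).mulVec x v := hquad
  rw [hT] at h1
  have key2 : 2 * c * ((d:ℝ) * s) - c^2 * ((d:ℝ) * n) = (d:ℝ) * s^2 / n := by
    rw [hc]; field_simp; ring
  linarith [h1, key2]

end Mix

section DegBound
variable {V : Type*} [Fintype V] [DecidableEq V] (E : Finset (V × V))

lemma deg_le_two_lam_sq (d : ℕ) (hd : 1 ≤ d)
    (hreg : ∀ v : V, (E.filter fun e => e.1 = v ∨ e.2 = v).card = d)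
    (lam : ℝ) (hlam0 : 0 < lam) (hA : matLambda (adjR E) ≤ lam)
    (hV : ((d : ℝ) ^ 2) / lam ^ 2 ≤ (Fintype.card V : ℝ)) (hne : Nonempty V) :
    (d : ℝ) ≤ 2 * lam ^ 2 := by
  classical
  have hnpos : (0:ℝ) < (Fintype.card V : ℝ) := by
    have : 0 < Fintype.card V := Fintype.card_pos
    exact_mod_cast this
  have hdpos : (0:ℝ) < (d : ℝ) := by exact_mod_cast hd
  by_cases hcase : (Fintype.card V : ℝ) ≤ 2 * d
  · -- small n case : d^2/lam^2 ≤ n ≤ 2d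
    have h1 : ((d : ℝ))^2 / lam^2 ≤ 2 * d := le_trans hV hcase
    rw [div_le_iff₀ (by positivity)] at h1
    nlinarith [h1, hdpos]
  · push_neg at hcase
    set n : ℝ := (Fintype.card V : ℝ) with hn'
    obtain ⟨v0⟩ := hne
    set x : V → ℝ := fun w => (if w = v0 then (1:ℝ) else 0) - 1/n with hx
    have hsum0 : ∑ v, x v = 0 := by
      simp only [hx, Finset.sum_sub_distrib, Finset.sum_ite_eq', Finset.mem_univ, if_true,
        Finset.sum_const, Finset.card_univ, nsmul_eq_mul]
      field_simp
      rw [hn']; ring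
    have hx2 : ∑ v, (x v)^2 = 1 - 1/n := by
      have expand : ∀ v, (x v)^2
          = (if v = v0 then (1:ℝ) else 0) - 2*(1/n)*(if v = v0 then (1:ℝ) else 0) + (1/n)^2 := by
        intro v
        simp only [hx]
        by_cases h : v = v0 <;> simp [h] <;> ring
      simp_rw [expand]
      simp only [Finset.sum_add_distrib, Finset.sum_sub_distrib, ← Finset.mul_sum,
        Finset.sum_ite_eq', Finset.mem_univ, if_true, Finset.sum_const, Finset.card_univ,
        nsmul_eq_mul]
      field_simp
      ring
    have hmv : ∀ w, (adjR E).mulVec x w = adjR E w v0 - (d:ℝ)/n := by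
      intro w
      have : (adjR E).mulVec x w = ∑ u, adjR E w u * x u := by
        simp [Matrix.mulVec, dotProduct]
      rw [this]
      have expand : ∀ u, adjR E w u * x u
          = (if u = v0 then adjR E w u else 0) - (1/n) * adjR E w u := by
        intro u
        simp only [hx]
        by_cases h : u = v0 <;> simp [h] <;> ring
      simp_rw [expand]
      rw [Finset.sum_sub_distrib, ← Finset.mul_sum, adjR_rowsum E d hreg w]
      rw [Finset.sum_ite_eq', if_pos (Finset.mem_univ v0)]
      ring
    have hAx2 : ∑ w, ((adjR E).mulVec x w)^2 = (∑ w, (adjR E w v0)^2) - (d:ℝ)^2/n := by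
      simp_rw [hmv]
      have expand : ∀ w, (adjR E w v0 - (d:ℝ)/n)^2
          = (adjR E w v0)^2 - 2*((d:ℝ)/n)*(adjR E w v0) + ((d:ℝ)/n)^2 := by
        intro w; ring
      simp_rw [expand]
      simp only [Finset.sum_add_distrib, Finset.sum_sub_distrib, ← Finset.mul_sum,
        Finset.sum_const, Finset.card_univ, nsmul_eq_mul]
      rw [adjR_colsum E d hreg v0]
      field_simp
      ring
    have hself : (d:ℝ) ≤ ∑ w, (adjR E w v0)^2 := by
      have h1 : ∀ w, (adjR E w v0 : ℝ) ≤ (adjR E w v0)^2 := by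
        intro w
        rw [adjR_eq]
        have : (adjN E w v0 : ℕ) ≤ (adjN E w v0)^2 := Nat.le_self_pow (by norm_num) _
        calc ((adjN E w v0 : ℕ) : ℝ) ≤ (((adjN E w v0)^2 : ℕ) : ℝ) := by exact_mod_cast this
          _ = ((adjN E w v0 : ℕ) : ℝ)^2 := by push_cast; ring
      calc (d:ℝ) = ∑ w, adjR E w v0 := (adjR_colsum E d hreg v0).symm
        _ ≤ ∑ w, (adjR E w v0)^2 := Finset.sum_le_sum (fun w _ => h1 w)
    have hspec := mulVec_sq_le_lam (adjR E) hlam0.le hA x hsum0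
    rw [hAx2, hx2] at hspec
    -- d - d^2/n ≤ lam^2 * (1 - 1/n), and n > 2d, d ≥ 1
    have hd2n : (d:ℝ)^2/n ≤ (d:ℝ)/2 := by
      rw [div_le_iff₀ hnpos]
      nlinarith [hcase, hdpos]
    have hlamsq : lam^2 * (1 - 1/n) ≤ lam^2 := by
      have : 0 < 1/n := by positivity
      nlinarith [sq_nonneg lam]
    nlinarith [hspec, hself, hd2n, hlamsq]

end DegBound

lemma poly_core (ε lam D : ℝ) (hε0 : 0 < ε) (hε1 : ε < 1) (hD : 1 ≤ D)
    (hlam0 : 0 < lam) (h3L : 3 * lam ≤ ε * D) (hdlam : D ≤ 2 * lam ^ 2) :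
    ε * (ε * D - 3 * lam) * (D + 1) * D ^ 3
      ≤ (ε * D ^ 2 - 2 * lam ^ 2) * ((ε * D ^ 2 - 2 * lam ^ 2) - lam * D) * (D + lam) := by
  have hDpos : (0:ℝ) < D := by linarith
  have ha1 : 0 ≤ ε * D - 3 * lam := by linarith
  have identity : (ε * D ^ 2 - 2 * lam ^ 2) * ((ε * D ^ 2 - 2 * lam ^ 2) - lam * D) * (D + lam)
      = ε * (ε * D - 3 * lam) * (D^2 + 2*lam^2) * D^2
        + ((ε^2 + 2*ε) * lam * D^4 - (5*ε + 2*ε^2) * lam^2 * D^3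
          + (2 + 2*ε) * lam^3 * D^2 + 6 * lam^4 * D + 4 * lam^5) := by
    ring
  rw [identity]
  have step1 : ε * (ε * D - 3 * lam) * (D + 1) * D ^ 3
      ≤ ε * (ε * D - 3 * lam) * (D^2 + 2*lam^2) * D^2 := by
    have h1 : D * (D + 1) ≤ D^2 + 2*lam^2 := by nlinarith
    have h2 : 0 ≤ ε * (ε * D - 3 * lam) * D^2 := by positivity
    nlinarith [mul_le_mul_of_nonneg_left h1 h2]
  have step2 : 0 ≤ (ε^2 + 2*ε) * lam * D^4 - (5*ε + 2*ε^2) * lam^2 * D^3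
      + (2 + 2*ε) * lam^3 * D^2 + 6 * lam^4 * D + 4 * lam^5 := by
    have key : (5*ε + 2*ε^2) * lam^2 * D^3 ≤ (5*ε + 2*ε^2) * (ε * D / 3) * lam * D^3 := by
      have hcoef : (0:ℝ) ≤ (5*ε + 2*ε^2) * lam * D^3 := by positivity
      have hlamle : lam ≤ ε * D / 3 := by linarith
      nlinarith [mul_le_mul_of_nonneg_left hlamle hcoef]
    have main : (5*ε + 2*ε^2) * (ε * D / 3) * lam * D^3 ≤ (ε^2 + 2*ε) * lam * D^4 := by
      have : (5*ε + 2*ε^2) * ε / 3 ≤ ε^2 + 2*ε := by nlinarith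
      have hpos : (0:ℝ) ≤ lam * D^4 := by positivity
      nlinarith [mul_le_mul_of_nonneg_right this hpos]
    have rest : (0:ℝ) ≤ (2 + 2*ε) * lam^3 * D^2 + 6 * lam^4 * D + 4 * lam^5 := by positivity
    linarith
  linarith

lemma numeric_main_gen (ε lam D : ℝ) (hε0 : 0 < ε) (hε1 : ε < 1) (hD : 1 ≤ D)
    (hlam0 : 0 < lam) (h3L : 3 * lam ≤ ε * D) (hdlam : D ≤ 2 * lam ^ 2)
    (n s : ℝ) (hn : D^2 / lam^2 ≤ n) (hs1 : ε * n - 2 ≤ s) (hs2 : s ≤ n) :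
    ε * (ε * D - 3 * lam) / (D + lam) * (D * n + n) ≤ D * s^2 / n - lam * s := by
  have hDpos : (0:ℝ) < D := by linarith
  have hnpos : (0:ℝ) < n := lt_of_lt_of_le (by positivity) hn
  have hDlam : (0:ℝ) < D + lam := by linarith
  have hnlam : D^2 ≤ n * lam^2 := by
    rw [div_le_iff₀ (by positivity : (0:ℝ) < lam^2)] at hn
    linarith
  have hlamsq : 9 * lam^2 ≤ ε^2 * D^2 := by
    nlinarith [mul_self_le_mul_self (by positivity : (0:ℝ) ≤ 3*lam) h3L]
  obtain ⟨T, hT'⟩ : ∃ T : ℝ, T = ε * D^2 - 2 * lam^2 := ⟨_, rfl⟩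
  have hTpos : (7/9) * ε * D^2 ≤ T := by
    rw [hT']
    have hee : 0 ≤ (ε - ε^2) * D^2 :=
      mul_nonneg (by nlinarith : (0:ℝ) ≤ ε - ε^2) (sq_nonneg D)
    nlinarith [hlamsq, hee]
  obtain ⟨s0, hs0'⟩ : ∃ s0 : ℝ, s0 = n * T / D^2 := ⟨_, rfl⟩
  have hs0_le : s0 ≤ s := by
    have h2n : 2 ≤ 2 * (n * lam^2) / D^2 := by
      rw [le_div_iff₀ (by positivity : (0:ℝ) < D^2)]
      linarith
    have heq : s0 = ε * n - 2 * (n * lam^2) / D^2 := by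
      rw [hs0', hT']
      field_simp
    linarith
  have hs0pos : 0 < s0 := by
    rw [hs0']
    have h0 : 0 < T := by nlinarith
    positivity
  have hmono : D * s0^2 - lam * s0 * n ≤ D * s^2 - lam * s * n := by
    have h1 : (7/9) * ε * n ≤ s0 := by
      rw [hs0', le_div_iff₀ (by positivity : (0:ℝ) < D^2)]
      nlinarith [hTpos, hnpos.le]
    have hfac : 0 ≤ D * (s + s0) - lam * n := by
      have f1 : D*((7/9)*ε*n) ≤ D*s0 := mul_le_mul_of_nonneg_left h1 hDpos.le
      have f2 : lam*n ≤ (ε*D/3)*n := mul_le_mul_of_nonneg_right (by linarith) hnpos.le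
      have f3 : D*s0 ≤ D*s := mul_le_mul_of_nonneg_left hs0_le hDpos.le
      nlinarith [f1, f2, f3]
    have expand : (D*s^2 - lam*s*n) - (D*s0^2 - lam*s0*n) = (s-s0)*(D*(s+s0) - lam*n) := by
      ring
    nlinarith [mul_nonneg (sub_nonneg.2 hs0_le) hfac, expand]
  have hcore := poly_core ε lam D hε0 hε1 hD hlam0 h3L hdlam
  have hkey : ε * (ε * D - 3 * lam) * (D + 1) * n^2 ≤ (D * s^2 - lam * s * n) * (D + lam) := by
    have h1 : (D * s0^2 - lam * s0 * n) * (D + lam)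
        = n^2 * (T * (T - lam * D) * (D + lam)) / D^3 := by
      rw [hs0']
      field_simp
    have h2 : ε * (ε * D - 3 * lam) * (D + 1) * n^2
        ≤ n^2 * (T * (T - lam * D) * (D + lam)) / D^3 := by
      rw [le_div_iff₀ (by positivity : (0:ℝ) < D^3)]
      calc ε * (ε * D - 3 * lam) * (D + 1) * n^2 * D^3
          = n^2 * (ε * (ε * D - 3 * lam) * (D + 1) * D^3) := by ring
        _ ≤ n^2 * (T * (T - lam * D) * (D + lam)) := by
            apply mul_le_mul_of_nonneg_left _ (sq_nonneg n)
            rw [hT']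
            exact hcore
    have h3 : (D * s0^2 - lam * s0 * n) * (D + lam) ≤ (D * s^2 - lam * s * n) * (D + lam) :=
      mul_le_mul_of_nonneg_right hmono hDlam.le
    linarith
  rw [div_mul_eq_mul_div, div_le_iff₀ hDlam]
  have hdiv : D * s^2 / n - lam * s = (D*s^2 - lam*s*n)/n := by
    field_simp
  rw [hdiv, div_mul_eq_mul_div, le_div_iff₀ hnpos]
  calc ε * (ε * D - 3 * lam) * (D * n + n) * n
      = ε * (ε * D - 3 * lam) * (D + 1) * n^2 := by ring
    _ ≤ (D * s^2 - lam * s * n) * (D + lam) := hkey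

lemma numeric_main (ε lam : ℝ) (d : ℕ) (hε0 : 0 < ε) (hε1 : ε < 1) (hd : 1 ≤ d)
    (hlam0 : 0 < lam) (hlam : lam / (d:ℝ) ≤ ε / 3) (hdlam : (d:ℝ) ≤ 2 * lam ^ 2)
    (n s : ℝ) (hn : ((d:ℝ))^2 / lam^2 ≤ n) (hs1 : ε * n - 2 ≤ s) (hs2 : s ≤ n) :
    ε ^ 2 * ((d : ℝ) / ((d : ℝ) + lam)) * (1 - 3 * lam / (ε * (d : ℝ))) * ((d:ℝ) * n + n)
      ≤ (d:ℝ) * s^2 / n - lam * s := by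
  have hD : 1 ≤ (d:ℝ) := by exact_mod_cast hd
  have hDpos : (0:ℝ) < (d:ℝ) := by linarith
  have h3L : 3 * lam ≤ ε * (d:ℝ) := by
    rw [div_le_div_iff₀ hDpos (by norm_num : (0:ℝ) < 3)] at hlam
    linarith
  have heps' : ε ^ 2 * ((d:ℝ) / ((d:ℝ) + lam)) * (1 - 3 * lam / (ε * (d:ℝ)))
      = ε * (ε * (d:ℝ) - 3 * lam) / ((d:ℝ) + lam) := by
    have h1 : (d:ℝ) + lam ≠ 0 := by positivity
    field_simp
  rw [heps']
  exact numeric_main_gen ε lam (d:ℝ) hε0 hε1 hD hlam0 h3L hdlam n s hn hs1 hs2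


section Cover
variable {V A : Type*} [Fintype V] [DecidableEq V] [Fintype A] [DecidableEq A]
variable (E : Finset (V × V)) (π : V × V → Set (A × A))

/-- edge property of covers -/
lemma cover_edge (C : Finset (V × A)) (hC : IsLYCover E π C) {e : V × V} (he : e ∈ E) :
    ∃ α β, (e.1, α) ∈ C ∧ (e.2, β) ∈ C ∧ (α, β) ∈ π e := by
  classical
  obtain ⟨⟨v, α⟩, hvC, hmem⟩ := hC (e, fun γ => decide ((e.1, γ) ∈ C)) he
  obtain ⟨-, h⟩ := hmem
  rcases h with ⟨h1, h2⟩ | ⟨h1, γ, hγπ, hγq⟩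
  · exfalso
    simp only at h2
    rw [decide_eq_false_iff_not] at h2
    exact h2 (h1 ▸ hvC)
  · refine ⟨γ, α, ?_, ?_, hγπ⟩
    · simpa using of_decide_eq_true hγq
    · exact h1 ▸ hvC

/-- every vertex has at least one label in a cover -/
lemma cover_vertex (d : ℕ) (hd : 1 ≤ d)
    (hreg : ∀ v : V, (E.filter fun e => e.1 = v ∨ e.2 = v).card = d)
    (C : Finset (V × A)) (hC : IsLYCover E π C) (v : V) :
    ∃ α, (v, α) ∈ C := by
  have hne : (E.filter fun e => e.1 = v ∨ e.2 = v).Nonempty := by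
    rw [← Finset.card_pos, hreg v]
    omega
  obtain ⟨e, he⟩ := hne
  rw [Finset.mem_filter] at he
  obtain ⟨heE, hv⟩ := he
  obtain ⟨α, β, h1, h2, -⟩ := cover_edge E π C hC heE
  rcases hv with hv | hv
  · exact ⟨α, hv ▸ h1⟩
  · exact ⟨β, hv ▸ h2⟩

end Cover

section Step
variable {V A : Type*} [DecidableEq V] [DecidableEq A]

open Classical in
/-- update an assignment using the uniquely-labeled vertices of a cover -/
noncomputable def stepA (C : Finset (V × A)) (ψ : V → A) : V → A :=
  fun v => if h : ∃! α, (v, α) ∈ C then h.choose else ψ v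

lemma stepA_of_unique {C : Finset (V × A)} {v : V} (h : ∃! α, (v, α) ∈ C) (ψ : V → A) :
    (v, stepA C ψ v) ∈ C ∧ ∀ β, (v, β) ∈ C → β = stepA C ψ v := by
  unfold stepA
  rw [dif_pos h]
  exact ⟨h.choose_spec.1, h.choose_spec.2⟩

lemma stepA_of_not_unique {C : Finset (V × A)} {v : V} (h : ¬ ∃! α, (v, α) ∈ C) (ψ : V → A) :
    stepA C ψ v = ψ v := by
  unfold stepA
  rw [dif_neg h]

lemma stepA_idem (C : Finset (V × A)) (ψ : V → A) (v : V) :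
    stepA C (stepA C ψ) v = stepA C ψ v := by
  by_cases h : ∃! α, (v, α) ∈ C
  · unfold stepA
    rw [dif_pos h, dif_pos h]
  · rw [stepA_of_not_unique h]

lemma stepA_congr {C C' : Finset (V × A)} {v : V}
    (h : ∀ α, (v, α) ∈ C ↔ (v, α) ∈ C') (ψ ψ' : V → A) (hψ : ψ v = ψ' v) :
    stepA C ψ v = stepA C' ψ' v := by
  by_cases hu : ∃! α, (v, α) ∈ C
  · have hu' : ∃! α, (v, α) ∈ C' := by
      obtain ⟨α, hα, huniq⟩ := hu
      exact ⟨α, (h α).1 hα, fun β hβ => huniq β ((h β).2 hβ)⟩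
    obtain ⟨hm, hun⟩ := stepA_of_unique hu ψ
    obtain ⟨hm', hun'⟩ := stepA_of_unique hu' ψ'
    exact hun' _ ((h _).1 hm)
  · have hu' : ¬ ∃! α, (v, α) ∈ C' := by
      intro ⟨α, hα, huniq⟩
      exact hu ⟨α, (h α).2 hα, fun β hβ => huniq β ((h β).1 hβ)⟩
    rw [stepA_of_not_unique hu, stepA_of_not_unique hu', hψ]

lemma stepA_image_eq [Fintype V] (χ : V → A) (ψ : V → A) :
    stepA (Finset.univ.image fun v => (v, χ v)) ψ = χ := by
  funext v
  have hu : ∃! α, (v, α) ∈ Finset.univ.image fun v => (v, χ v) := by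
    refine ⟨χ v, ?_, ?_⟩
    · exact Finset.mem_image.2 ⟨v, Finset.mem_univ v, rfl⟩
    · intro β hβ
      obtain ⟨w, -, hw⟩ := Finset.mem_image.1 hβ
      have h1 : w = v := congrArg Prod.fst hw
      have h2 : χ w = β := congrArg Prod.snd hw
      rw [← h2, h1]
  obtain ⟨hm, hun⟩ := stepA_of_unique hu ψ
  obtain ⟨w, -, hw⟩ := Finset.mem_image.1 hm
  have h1 : w = v := congrArg Prod.fst hw
  have h2 : χ w = stepA (Finset.univ.image fun v => (v, χ v)) ψ v := congrArg Prod.snd hw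
  rw [← h2, h1]

/-- one reconfiguration step gives adjacent assignments -/
lemma stepA_adj (hV : Nonempty V) {C C' : Finset (V × A)}
    (h : ((C \ C') ∪ (C' \ C)).card ≤ 1) (ψ : V → A) :
    adjOne (stepA C ψ) (stepA C' (stepA C ψ)) := by
  rcases Finset.eq_empty_or_nonempty ((C \ C') ∪ (C' \ C)) with hD | ⟨p, hp⟩
  · have hCC' : ∀ v α, (v, α) ∈ C ↔ (v, α) ∈ C' := by
      intro v α
      rw [Finset.union_eq_empty] at hD
      constructor
      · intro hm
        by_contra hm'
        have : (v, α) ∈ C \ C' := Finset.mem_sdiff.2 ⟨hm, hm'⟩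
        rw [hD.1] at this
        exact absurd this (Finset.notMem_empty _)
      · intro hm
        by_contra hm'
        have : (v, α) ∈ C' \ C := Finset.mem_sdiff.2 ⟨hm, hm'⟩
        rw [hD.2] at this
        exact absurd this (Finset.notMem_empty _)
    obtain ⟨v0⟩ := hV
    refine ⟨v0, fun v _ => ?_⟩
    calc stepA C ψ v = stepA C (stepA C ψ) v := (stepA_idem C ψ v).symm
      _ = stepA C' (stepA C ψ) v := stepA_congr (hCC' v) _ _ rfl
  · refine ⟨p.1, fun v hv => ?_⟩
    have hsingle : ∀ q ∈ (C \ C') ∪ (C' \ C), q = p := by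
      intro q hq
      exact Finset.card_le_one.1 h q hq p hp
    have hCC' : ∀ α, (v, α) ∈ C ↔ (v, α) ∈ C' := by
      intro α
      constructor
      · intro hm
        by_contra hm'
        have h1 : ((v, α) : V × A) ∈ (C \ C') ∪ (C' \ C) :=
          Finset.mem_union_left _ (Finset.mem_sdiff.2 ⟨hm, hm'⟩)
        exact hv (congrArg Prod.fst (hsingle _ h1))
      · intro hm
        by_contra hm'
        have h1 : ((v, α) : V × A) ∈ (C \ C') ∪ (C' \ C) :=
          Finset.mem_union_right _ (Finset.mem_sdiff.2 ⟨hm, hm'⟩)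
        exact hv (congrArg Prod.fst (hsingle _ h1))
    calc stepA C ψ v = stepA C (stepA C ψ) v := (stepA_idem C ψ v).symm
      _ = stepA C' (stepA C ψ) v := stepA_congr hCC' _ _ rfl

end Step

section Count
variable {V A : Type*} [Fintype V] [DecidableEq V] [Fintype A] [DecidableEq A]

open Classical in
lemma card_U_bound (C : Finset (V × A)) (hlab : ∀ v : V, ∃ α, (v, α) ∈ C) :
    2 * Fintype.card V ≤ C.card + (Finset.univ.filter (fun v => ∃! α, (v, α) ∈ C)).card := by
  classical
  have hfib : C.card = ∑ v : V, (C.filter fun p => p.1 = v).card :=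
    Finset.card_eq_sum_card_fiberwise (fun x _ => Finset.mem_univ x.1)
  have hU : (Finset.univ.filter (fun v => ∃! α, (v, α) ∈ C)).card
      = ∑ v : V, (if (∃! α, (v, α) ∈ C) then 1 else 0) := by
    rw [Finset.card_filter]
  have hper : ∀ v : V, 2 ≤ (C.filter fun p => p.1 = v).card
      + (if (∃! α, (v, α) ∈ C) then 1 else 0) := by
    intro v
    obtain ⟨α, hα⟩ := hlab v
    have hmem : ((v, α) : V × A) ∈ C.filter fun p => p.1 = v :=
      Finset.mem_filter.2 ⟨hα, rfl⟩
    have h1 : 1 ≤ (C.filter fun p => p.1 = v).card :=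
      Finset.card_pos.2 ⟨_, hmem⟩
    by_cases hu : ∃! α, (v, α) ∈ C
    · rw [if_pos hu]
      omega
    · rw [if_neg hu]
      rcases Nat.lt_or_ge (C.filter fun p => p.1 = v).card 2 with hlt | hge
      · exfalso
        have hcard1 : (C.filter fun p => p.1 = v).card = 1 := by omega
        obtain ⟨q, hq⟩ := Finset.card_eq_one.1 hcard1
        apply hu
        have hqv : q.1 = v := by
          have : q ∈ C.filter fun p => p.1 = v := by rw [hq]; exact Finset.mem_singleton_self q
          exact (Finset.mem_filter.1 this).2
        refine ⟨q.2, ?_, ?_⟩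
        · have : q ∈ C := by
            have : q ∈ C.filter fun p => p.1 = v := by rw [hq]; exact Finset.mem_singleton_self q
            exact (Finset.mem_filter.1 this).1
          have hq' : ((v, q.2) : V × A) = q := by
            rw [← hqv]
          show ((v, q.2) : V × A) ∈ C
          rw [hq']
          exact this
        · intro β hβ
          have : ((v, β) : V × A) ∈ C.filter fun p => p.1 = v := Finset.mem_filter.2 ⟨hβ, rfl⟩
          rw [hq, Finset.mem_singleton] at this
          exact congrArg Prod.snd this.symm ▸ (congrArg Prod.snd this).symm
      · omega
  calc 2 * Fintype.card V = ∑ _v : V, 2 := by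
        rw [Finset.sum_const, Finset.card_univ, smul_eq_mul, mul_comm]
    _ ≤ ∑ v : V, ((C.filter fun p => p.1 = v).card + (if (∃! α, (v, α) ∈ C) then 1 else 0)) :=
        Finset.sum_le_sum (fun v _ => hper v)
    _ = C.card + (Finset.univ.filter (fun v => ∃! α, (v, α) ∈ C)).card := by
        rw [Finset.sum_add_distrib, ← hfib, ← hU]

open Classical in
lemma natcard_filter_eq (E : Finset (V × V)) (p : (V × V) → Prop) :
    Nat.card {i : {x // x ∈ E} // p i.1} = (E.filter p).card := by
  classical
  have e : {i : {x // x ∈ E} // p i.1} ≃ {x // x ∈ E.filter p} := by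
    refine ⟨fun i => ⟨i.1.1, Finset.mem_filter.2 ⟨i.1.2, i.2⟩⟩,
      fun x => ⟨⟨x.1, (Finset.mem_filter.1 x.2).1⟩, (Finset.mem_filter.1 x.2).2⟩, ?_, ?_⟩
    · intro i; rfl
    · intro x; rfl
  rw [Nat.card_congr e, Nat.card_eq_fintype_card, Fintype.card_coe]

end Count

section CoverVal
variable {V A : Type*} [Fintype V] [DecidableEq V] [Fintype A] [DecidableEq A]

open Classical in
lemma cover_val (E : Finset (V × V)) (π : V × V → Set (A × A))
    (ε : ℝ) (hε0 : 0 < ε) (hε1 : ε < 1)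
    (d : ℕ) (hd : 1 ≤ d) (lam : ℝ) (hlam0 : 0 < lam) (hlam : lam / (d : ℝ) ≤ ε / 3)
    (hreg : ∀ v : V, (E.filter fun e => e.1 = v ∨ e.2 = v).card = d)
    (hA : matLambda (adjR E) ≤ lam)
    (hV : ((d : ℝ) ^ 2) / lam ^ 2 ≤ (Fintype.card V : ℝ))
    (C : Finset (V × A)) (hC : IsLYCover E π C)
    (hcard : (C.card : ℝ) ≤ (2 - ε) * ((Fintype.card V : ℝ) + 1))
    (ψprev : V → A) :
    ε ^ 2 * ((d : ℝ) / ((d : ℝ) + lam)) * (1 - 3 * lam / (ε * (d : ℝ)))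
      ≤ valC (fun e : {x // x ∈ E} => fun ψ : V → A => (ψ e.1.1, ψ e.1.2) ∈ π e.1)
          (stepA C ψprev) := by
  classical
  have hnnat : 0 < Fintype.card V := by
    by_contra h
    push_neg at h
    have h0 : Fintype.card V = 0 := by omega
    rw [h0] at hV
    push_cast at hV
    have hdp : (0:ℝ) < (d:ℝ) := by exact_mod_cast hd
    have : (0:ℝ) < (d:ℝ)^2 / lam^2 := by positivity
    linarith
  have hnpos : (0:ℝ) < (Fintype.card V : ℝ) := by exact_mod_cast hnnat
  have hdpos : (0:ℝ) < (d:ℝ) := by exact_mod_cast hd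
  have hEpos : 0 < E.card := by
    obtain ⟨v⟩ := Fintype.card_pos_iff.1 hnnat
    have := hreg v
    have h1 : 0 < (E.filter fun e => e.1 = v ∨ e.2 = v).card := by omega
    obtain ⟨e, he⟩ := Finset.card_pos.1 h1
    exact Finset.card_pos.2 ⟨e, (Finset.mem_filter.1 he).1⟩
  -- the uniquely-labeled set
  set U : Finset V := Finset.univ.filter (fun v => ∃! α, (v, α) ∈ C) with hU'
  have hlab : ∀ v : V, ∃ α, (v, α) ∈ C := cover_vertex E π d hd hreg C hC
  have hcount := card_U_bound C hlab
  have hUlow : ε * (Fintype.card V : ℝ) - 2 ≤ (U.card : ℝ) := by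
    have h1 : (2 * Fintype.card V : ℝ) ≤ (C.card : ℝ) + (U.card : ℝ) := by
      rw [hU']
      exact_mod_cast hcount
    nlinarith [hcard, h1, hε1, hnpos]
  have hUhigh : (U.card : ℝ) ≤ (Fintype.card V : ℝ) := by
    have : U.card ≤ Fintype.card V := by
      rw [← Finset.card_univ]
      exact Finset.card_le_card (Finset.filter_subset _ _)
    exact_mod_cast this
  -- mixing bound
  have hmix := mixing E d hreg lam hlam0 hA hnnat U
  -- edges inside U are satisfied
  have hins : (E.filter fun e => e.1 ∈ U ∧ e.2 ∈ U)
      ⊆ E.filter fun e => ((stepA C ψprev) e.1, (stepA C ψprev) e.2) ∈ π e := by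
    intro e he
    rw [Finset.mem_filter] at he ⊢
    obtain ⟨heE, h1, h2⟩ := he
    refine ⟨heE, ?_⟩
    rw [hU', Finset.mem_filter] at h1 h2
    obtain ⟨α, β, hα, hβ, hπ⟩ := cover_edge E π C hC heE
    obtain ⟨hm1, hu1⟩ := stepA_of_unique h1.2 ψprev
    obtain ⟨hm2, hu2⟩ := stepA_of_unique h2.2 ψprev
    rw [← hu1 α hα, ← hu2 β hβ]
    exact hπ
  -- counting chain in ℝ
  have hQcast : (((∑ v ∈ U, ∑ w ∈ U, adjN E v w) : ℕ) : ℝ) = ∑ v ∈ U, ∑ w ∈ U, adjR E v w := by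
    push_cast
    apply Finset.sum_congr rfl; intro v _
    apply Finset.sum_congr rfl; intro w _
    rw [adjR_eq]
  have hQle : (((∑ v ∈ U, ∑ w ∈ U, adjN E v w) : ℕ) : ℝ)
      ≤ 2 * ((E.filter fun e => e.1 ∈ U ∧ e.2 ∈ U).card : ℝ) := by
    have := Q_le_two_inside E U
    exact_mod_cast this
  have hsatcard : ((E.filter fun e => e.1 ∈ U ∧ e.2 ∈ U).card : ℝ)
      ≤ ((E.filter fun e => ((stepA C ψprev) e.1, (stepA C ψprev) e.2) ∈ π e).card : ℝ) := by
    exact_mod_cast Finset.card_le_card hins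
  have hEcard : (E.card : ℝ) * 2 ≤ ((d : ℝ) + 1) * (Fintype.card V : ℝ) := Ecard_le E d hreg
  have hdlam : (d : ℝ) ≤ 2 * lam ^ 2 :=
    deg_le_two_lam_sq E d hd hreg lam hlam0 hA hV (Fintype.card_pos_iff.1 hnnat)
  have hnum := numeric_main ε lam d hε0 hε1 hd hlam0 hlam hdlam
    (Fintype.card V : ℝ) (U.card : ℝ) hV hUlow hUhigh
  -- epsilon' is nonneg
  have heps_nonneg : 0 ≤ ε ^ 2 * ((d : ℝ) / ((d : ℝ) + lam)) * (1 - 3 * lam / (ε * (d : ℝ))) := by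
    have h3L : 3 * lam ≤ ε * (d:ℝ) := by
      rw [div_le_div_iff₀ hdpos (by norm_num : (0:ℝ) < 3)] at hlam
      linarith
    have h1 : 0 ≤ 1 - 3 * lam / (ε * (d : ℝ)) := by
      rw [sub_nonneg, div_le_one (by positivity)]
      linarith
    positivity
  -- put everything together
  set eps' : ℝ := ε ^ 2 * ((d : ℝ) / ((d : ℝ) + lam)) * (1 - 3 * lam / (ε * (d : ℝ))) with heps'
  have hchain : eps' * (2 * (E.card : ℝ))
      ≤ 2 * ((E.filter fun e => ((stepA C ψprev) e.1, (stepA C ψprev) e.2) ∈ π e).card : ℝ) := by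
    calc eps' * (2 * (E.card : ℝ))
        ≤ eps' * (((d : ℝ) + 1) * (Fintype.card V : ℝ)) := by
          apply mul_le_mul_of_nonneg_left _ heps_nonneg
          linarith
      _ = eps' * ((d : ℝ) * (Fintype.card V : ℝ) + (Fintype.card V : ℝ)) := by ring
      _ ≤ (d:ℝ) * (U.card : ℝ)^2 / (Fintype.card V : ℝ) - lam * (U.card : ℝ) := hnum
      _ ≤ ∑ v ∈ U, ∑ w ∈ U, adjR E v w := hmix
      _ = (((∑ v ∈ U, ∑ w ∈ U, adjN E v w) : ℕ) : ℝ) := hQcast.symm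
      _ ≤ 2 * ((E.filter fun e => e.1 ∈ U ∧ e.2 ∈ U).card : ℝ) := hQle
      _ ≤ 2 * ((E.filter fun e => ((stepA C ψprev) e.1, (stepA C ψprev) e.2) ∈ π e).card : ℝ) := by
          linarith
  have hval : valC (fun e : {x // x ∈ E} => fun ψ : V → A => (ψ e.1.1, ψ e.1.2) ∈ π e.1)
      (stepA C ψprev)
      = ((E.filter fun e => ((stepA C ψprev) e.1, (stepA C ψprev) e.2) ∈ π e).card : ℝ)
        / (E.card : ℝ) := by
    unfold valC
    rw [natcard_filter_eq E (fun e => ((stepA C ψprev) e.1, (stepA C ψprev) e.2) ∈ π e)]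
    rw [Fintype.card_coe]
  rw [hval, le_div_iff₀ (by exact_mod_cast hEpos : (0:ℝ) < (E.card:ℝ))]
  linarith
end CoverVal

section Build
variable {V A : Type*} [DecidableEq V] [DecidableEq A]

noncomputable def buildList (ψ : V → A) : List (Finset (V × A)) → List (V → A)
  | [] => []
  | C :: rest => stepA C ψ :: buildList (stepA C ψ) rest

lemma buildList_ne_nil (ψ : V → A) (l : List (Finset (V × A))) (h : l ≠ []) :
    buildList ψ l ≠ [] := by
  cases l with
  | nil => exact absurd rfl h
  | cons C rest => exact List.cons_ne_nil _ _

lemma buildList_getLast? :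
    ∀ (l : List (Finset (V × A))) (ψ : V → A) (C : Finset (V × A)),
      l.getLast? = some C → ∃ ψ', (buildList ψ l).getLast? = some (stepA C ψ')
  | [], ψ, C => by intro h; simp at h
  | [C0], ψ, C => by
      intro h
      simp at h
      subst h
      exact ⟨ψ, rfl⟩
  | C0 :: C1 :: rest, ψ, C => by
      intro h
      rw [List.getLast?_cons_cons] at h
      obtain ⟨ψ', h'⟩ := buildList_getLast? (C1 :: rest) (stepA C0 ψ) C h
      refine ⟨ψ', ?_⟩
      have heq : buildList ψ (C0 :: C1 :: rest)
          = stepA C0 ψ :: stepA C1 (stepA C0 ψ) :: buildList (stepA C1 (stepA C0 ψ)) rest := rfl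
      have heq2 : buildList (stepA C0 ψ) (C1 :: rest)
          = stepA C1 (stepA C0 ψ) :: buildList (stepA C1 (stepA C0 ψ)) rest := rfl
      rw [heq, List.getLast?_cons_cons]
      rw [heq2] at h'
      exact h'

lemma buildList_chain' (hV : Nonempty V) :
    ∀ (l : List (Finset (V × A))) (ψ : V → A),
      l.Chain' (fun P Q => ((P \ Q) ∪ (Q \ P)).card ≤ 1) → (buildList ψ l).Chain' adjOne
  | [], ψ, _ => List.isChain_nil
  | [C0], ψ, _ => by
      exact List.isChain_singleton _
  | C0 :: C1 :: rest, ψ, h => by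
      obtain ⟨hR, htail⟩ := List.isChain_cons_cons.1 h
      have ih := buildList_chain' hV (C1 :: rest) (stepA C0 ψ) htail
      have heq : buildList ψ (C0 :: C1 :: rest)
          = stepA C0 ψ :: stepA C1 (stepA C0 ψ) :: buildList (stepA C1 (stepA C0 ψ)) rest := rfl
      have heq2 : buildList (stepA C0 ψ) (C1 :: rest)
          = stepA C1 (stepA C0 ψ) :: buildList (stepA C1 (stepA C0 ψ)) rest := rfl
      rw [heq]
      rw [heq2] at ih
      exact List.isChain_cons_cons.2 ⟨stepA_adj hV hR ψ, ih⟩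

lemma buildList_mem :
    ∀ (l : List (Finset (V × A))) (ψ φ : V → A), φ ∈ buildList ψ l →
      ∃ C ∈ l, ∃ ψ0, φ = stepA C ψ0
  | [], ψ, φ => by intro h; simp [buildList] at h
  | C0 :: rest, ψ, φ => by
      intro h
      have heq : buildList ψ (C0 :: rest) = stepA C0 ψ :: buildList (stepA C0 ψ) rest := rfl
      rw [heq, List.mem_cons] at h
      rcases h with h | h
      · exact ⟨C0, List.mem_cons_self, ψ, h⟩
      · obtain ⟨C, hC, ψ0, hψ0⟩ := buildList_mem rest (stepA C0 ψ) φ h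
        exact ⟨C, List.mem_cons_of_mem _ hC, ψ0, hψ0⟩

end Build

section FoldrMin

lemma foldr_min_le_one_s16 (L : List ℝ) : L.foldr min 1 ≤ 1 := by
  induction L with
  | nil => simp
  | cons x L ih =>
    simp only [List.foldr_cons]
    exact le_trans (min_le_right _ _) ih

lemma le_foldr_min_s16 (r : ℝ) (L : List ℝ) (h1 : r ≤ 1) (h : ∀ x ∈ L, r ≤ x) :
    r ≤ L.foldr min 1 := by
  induction L with
  | nil => simpa
  | cons x L ih =>
    simp only [List.foldr_cons]
    exact le_min (h x (List.mem_cons_self)) (ih (fun y hy => h y (List.mem_cons_of_mem _ hy)))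

end FoldrMin


/-- soundness of the reduction to Set Cover Reconfiguration.  Suppose the
underlying graph of `G` is `d`-regular with adjacency matrix `A` satisfying `λ(A) ≤ λ`,
`ε ∈ (0,1)`, `λ > 0`, `λ/d ≤ ε/3`, `|V| ≥ d²/λ²`, `ψi, ψt` are satisfying assignments and
`val_G(ψi ↭ ψt) < ε' = ε²·(d/(d+λ))·(1 − 3λ/(εd))`.  Then every reconfiguration sequence of
covers of the Lund–Yannakakis system from `C_{ψi}` to `C_{ψt}` contains a cover `C` with
`|C| > (2 − ε)(|V| + 1)`. -/
theorem setcover_reconf_soundness {V A : Type*} [Fintype V] [DecidableEq V]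
    [Fintype A] [DecidableEq A]
    (E : Finset (V × V)) (π : V × V → Set (A × A))
    (ε : ℝ) (hε0 : 0 < ε) (hε1 : ε < 1)
    (d : ℕ) (hd : 1 ≤ d) (lam : ℝ) (hlam0 : 0 < lam) (hlam : lam / (d : ℝ) ≤ ε / 3)
    (hreg : ∀ v : V, (E.filter fun e => e.1 = v ∨ e.2 = v).card = d)
    (hA : matLambda (Matrix.of fun v w : V =>
      ((E.filter fun e => e = (v, w) ∨ e = (w, v)).card : ℝ)) ≤ lam)
    (hV : ((d : ℝ) ^ 2) / lam ^ 2 ≤ (Fintype.card V : ℝ))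
    (ψi ψt : V → A)
    (hψi : ∀ e ∈ E, (ψi e.1, ψi e.2) ∈ π e) (hψt : ∀ e ∈ E, (ψt e.1, ψt e.2) ∈ π e)
    (hval : maxValC (fun e : {x // x ∈ E} => fun ψ : V → A =>
        (ψ e.1.1, ψ e.1.2) ∈ π e.1) ψi ψt
      < ε ^ 2 * ((d : ℝ) / ((d : ℝ) + lam)) * (1 - 3 * lam / (ε * (d : ℝ)))) :
    ∀ l : List (Finset (V × A)), l ≠ [] →
      l.head? = some (Finset.univ.image fun v => (v, ψi v)) →
      l.getLast? = some (Finset.univ.image fun v => (v, ψt v)) →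
      l.Chain' (fun P Q => ((P \ Q) ∪ (Q \ P)).card ≤ 1) →
      (∀ C ∈ l, IsLYCover E π C) →
      ∃ C ∈ l, (2 - ε) * ((Fintype.card V : ℝ) + 1) < (C.card : ℝ) := by
  intro l hlne hlhead hllast hlchain hlcover
  by_contra hcon
  push_neg at hcon
  have hA' : matLambda (adjR E) ≤ lam := hA
  have hdpos : (0:ℝ) < (d:ℝ) := by exact_mod_cast hd
  have hnnat : 0 < Fintype.card V := by
    by_contra h
    push_neg at h
    have h0 : Fintype.card V = 0 := by omega
    rw [h0] at hV
    push_cast at hV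
    have : (0:ℝ) < (d:ℝ)^2 / lam^2 := by positivity
    linarith
  have hVne : Nonempty V := Fintype.card_pos_iff.1 hnnat
  -- build the assignment sequence
  set sat : {x // x ∈ E} → (V → A) → Prop :=
    fun e => fun ψ : V → A => (ψ e.1.1, ψ e.1.2) ∈ π e.1 with hsat'
  set eps' : ℝ := ε ^ 2 * ((d : ℝ) / ((d : ℝ) + lam)) * (1 - 3 * lam / (ε * (d : ℝ)))
    with heps'
  set bl : List (V → A) := buildList ψi l with hbl'
  have hblne : bl ≠ [] := buildList_ne_nil ψi l hlne
  -- head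
  obtain ⟨C0, rest, rfl⟩ : ∃ C0 rest, l = C0 :: rest := by
    cases l with
    | nil => exact absurd rfl hlne
    | cons C0 rest => exact ⟨C0, rest, rfl⟩
  have hC0 : C0 = Finset.univ.image fun v => (v, ψi v) := by
    simpa using hlhead
  have hblhead : bl.head? = some ψi := by
    have h1 : bl = stepA C0 ψi :: buildList (stepA C0 ψi) rest := rfl
    rw [h1]
    rw [hC0, stepA_image_eq ψi ψi]
    rfl
  -- last
  have hbllast : bl.getLast? = some ψt := by
    obtain ⟨ψ', h'⟩ := buildList_getLast? (C0 :: rest) ψi _ hllast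
    rw [stepA_image_eq ψt ψ'] at h'
    exact h'
  -- chain
  have hblchain : bl.Chain' adjOne := buildList_chain' hVne (C0 :: rest) ψi hlchain
  -- values
  have hblval : ∀ φ ∈ bl, eps' ≤ valC sat φ := by
    intro φ hφ
    obtain ⟨C, hC, ψ0, rfl⟩ := buildList_mem (C0 :: rest) ψi φ hφ
    exact cover_val E π ε hε0 hε1 d hd lam hlam0 hlam hreg hA' hV C (hlcover C hC)
      (hcon C hC) ψ0
  -- eps' ≤ 1
  have h3L : 3 * lam ≤ ε * (d:ℝ) := by
    rw [div_le_div_iff₀ hdpos (by norm_num : (0:ℝ) < 3)] at hlam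
    linarith
  have heps_le_one : eps' ≤ 1 := by
    rw [heps']
    have hf1 : (d:ℝ)/((d:ℝ)+lam) ≤ 1 := by
      rw [div_le_one (by linarith)]
      linarith
    have hf0 : (0:ℝ) ≤ (d:ℝ)/((d:ℝ)+lam) := by positivity
    have hg1 : 1 - 3 * lam / (ε * (d:ℝ)) ≤ 1 := by
      have : (0:ℝ) ≤ 3 * lam / (ε * (d:ℝ)) := by positivity
      linarith
    have hg0 : (0:ℝ) ≤ 1 - 3 * lam / (ε * (d:ℝ)) := by
      rw [sub_nonneg, div_le_one (by positivity)]
      linarith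
    have he2 : ε^2 ≤ 1 := by nlinarith
    have he20 : (0:ℝ) ≤ ε^2 := sq_nonneg ε
    nlinarith [mul_le_mul hf1 hg1 hg0 (by linarith : (0:ℝ) ≤ (1:ℝ)),
      mul_nonneg hf0 hg0, mul_le_mul he2 (mul_le_mul hf1 hg1 hg0 (by linarith)) (mul_nonneg hf0 hg0) (by linarith)]
  -- min value of the sequence
  have hseq : eps' ≤ valSeqC sat bl := by
    unfold valSeqC
    apply le_foldr_min_s16 _ _ heps_le_one
    intro x hx
    obtain ⟨φ, hφ, rfl⟩ := List.mem_map.1 hx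
    exact hblval φ hφ
  -- membership in the sup set
  have hmem : valSeqC sat bl ∈ {r : ℝ | ∃ l' : List (V → A), l' ≠ [] ∧ l'.head? = some ψi ∧
      l'.getLast? = some ψt ∧ l'.Chain' adjOne ∧ r = valSeqC sat l'} :=
    ⟨bl, hblne, hblhead, hbllast, hblchain, rfl⟩
  have hbdd : BddAbove {r : ℝ | ∃ l' : List (V → A), l' ≠ [] ∧ l'.head? = some ψi ∧
      l'.getLast? = some ψt ∧ l'.Chain' adjOne ∧ r = valSeqC sat l'} := by
    refine ⟨1, ?_⟩
    rintro r ⟨l', -, -, -, -, rfl⟩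
    exact foldr_min_le_one_s16 _
  have hsup : valSeqC sat bl ≤ maxValC sat ψi ψt := le_csSup hbdd hmem
  rw [hsat'] at hsup
  have : eps' ≤ maxValC (fun e : {x // x ∈ E} => fun ψ : V → A =>
      (ψ e.1.1, ψ e.1.2) ∈ π e.1) ψi ψt := by
    calc eps' ≤ valSeqC sat bl := hseq
      _ ≤ _ := hsup
  rw [heps'] at this
  linarith
end
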